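/- arXiv:1707.05294 — 6 statements merged into one kernel-verified Lean document; each statement's English description precedes it below -/
import Mathlib

section
/- Let S be a 5-pole obtained by deleting a path P_3 from a snark, with dangling edges A, B, C, B', A' as usual. In any proper 3-edge-coloring of S, if A and B receive different colors, then A' and B' receive the same color, and if A and B receive the same color, then A' and B' receive different colors. -/
namespace LoupAux

/-- Embedding of the three colors into the Klein group. -/
def f : Fin 3 → ZMod 2 × ZMod 2
  | 0 => (1, 0)
  | 1 => (0, 1)
  | 2 => (1, 1)

lemma sum_f : ∑ x : Fin 3, f x = 0 := by decide

lemma key1 : ∀ a b cc a' b' : Fin 3,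
    f a + f b + f cc + f a' + f b' = 0 → a' = b' → a ≠ b := by decide

lemma key2 : ∀ a b cc a' b' : Fin 3,
    f a + f b + f cc + f a' + f b' = 0 → a ≠ b → a' ≠ b' →
    (-(a+b) ≠ a ∧ -(a+b) ≠ b ∧ -(a'+b') ≠ a' ∧ -(a'+b') ≠ b' ∧
     -(a+b) ≠ -(a'+b') ∧ -(a+b) ≠ cc ∧ -(a'+b') ≠ cc) := by decide

lemma self_add_self (z : ZMod 2 × ZMod 2) : z + z = 0 := by
  revert z; decide

variable {V : Type*} [Fintype V] [DecidableEq V]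
  (G : SimpleGraph V) [DecidableRel G.Adj]

lemma nbhd_eq {v a b d : V} (hdeg : G.degree v = 3)
    (ha : G.Adj v a) (hb : G.Adj v b) (hd : G.Adj v d)
    (hab : a ≠ b) (had : a ≠ d) (hbd : b ≠ d) :
    G.neighborFinset v = ({a, b, d} : Finset V) := by
  refine (Finset.eq_of_subset_of_card_le ?_ ?_).symm
  · intro x hx
    simp only [Finset.mem_insert, Finset.mem_singleton] at hx
    rcases hx with rfl | rfl | rfl <;> simp [SimpleGraph.mem_neighborFinset, ha, hb, hd]
  · rw [SimpleGraph.card_neighborFinset_eq_degree, hdeg]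
    rw [Finset.card_insert_of_notMem (by simp [hab, had]),
       Finset.card_insert_of_notMem (by simp [hbd]), Finset.card_singleton]

lemma edge_class {v a b d : V} (h : G.neighborFinset v = ({a, b, d} : Finset V)) :
    ∀ e ∈ G.edgeSet, v ∈ e → e = s(v, a) ∨ e = s(v, b) ∨ e = s(v, d) := by
  intro e
  induction e using Sym2.ind with
  | _ x y =>
    intro he hm
    rw [SimpleGraph.mem_edgeSet] at he
    rw [Sym2.mem_iff] at hm
    rcases hm with h1 | h1
    · obtain rfl := h1.symm
      have : y ∈ G.neighborFinset x := by simp [SimpleGraph.mem_neighborFinset, he]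
      rw [h] at this
      simp only [Finset.mem_insert, Finset.mem_singleton] at this
      rcases this with rfl | rfl | rfl <;> simp
    · obtain rfl := h1.symm
      have : x ∈ G.neighborFinset y := by
        simp [SimpleGraph.mem_neighborFinset, he.symm]
      rw [h] at this
      simp only [Finset.mem_insert, Finset.mem_singleton] at this
      rcases this with rfl | rfl | rfl <;> simp [Sym2.eq_swap]

omit [DecidableEq V] in
lemma sum_nbhd_zero {v : V} (c : Sym2 V → Fin 3) (hdeg : G.degree v = 3)
    (hinj : ∀ u ∈ G.neighborFinset v, ∀ u' ∈ G.neighborFinset v,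
      c s(v, u) = c s(v, u') → u = u') :
    ∑ u ∈ G.neighborFinset v, f (c s(v, u)) = 0 := by
  classical
  have himg : (G.neighborFinset v).image (fun u => c s(v, u)) = Finset.univ := by
    apply Finset.eq_univ_of_card
    rw [Finset.card_image_of_injOn hinj, SimpleGraph.card_neighborFinset_eq_degree, hdeg]
    simp
  calc ∑ u ∈ G.neighborFinset v, f (c s(v, u))
      = ∑ x ∈ (G.neighborFinset v).image (fun u => c s(v, u)), f x :=
        (Finset.sum_image hinj).symm
    _ = ∑ x : Fin 3, f x := by rw [himg]
    _ = 0 := sum_f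

end LoupAux

open LoupAux



/-- A coloring is proper on the edge set `E` away from the vertex set `X` if
any two distinct edges of `E` sharing an endpoint outside `X` get distinct colors. -/
def ProperOn {V : Type*} (E : Set (Sym2 V)) (X : Set V) (c : Sym2 V → Fin 3) : Prop :=
  ∀ e₁ ∈ E, ∀ e₂ ∈ E, e₁ ≠ e₂ → (∃ v, v ∉ X ∧ v ∈ e₁ ∧ v ∈ e₂) → c e₁ ≠ c e₂

/-- **Match/mismatch property of Loupekine 5-poles.** Let `S` be the 5-pole
obtained from a snark `G` by deleting the path `s — w — t`, with dangling edges
`A = s(s,sa)`, `B = s(s,sb)`, `C = s(w,vC)`, `A' = s(t,ta)`, `B' = s(t,tb)`.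
In any proper 3-edge-coloring of `S`, `A` and `B` receive different colors
iff `A'` and `B'` receive the same color. -/
theorem loupekine_match_mismatch {V : Type*} [Fintype V] [DecidableEq V]
    (G : SimpleGraph V) [DecidableRel G.Adj]
    (hcubic : ∀ v : V, G.degree v = 3)
    (hsnark : ¬ ∃ c : Sym2 V → Fin 3, ProperOn G.edgeSet (∅ : Set V) c)
    (s w t sa sb ta tb vC : V)
    (hsw : G.Adj s w) (hwt : G.Adj w t) (hst : s ≠ t)
    (hsa : G.Adj s sa) (hsb : G.Adj s sb) (hsab : sa ≠ sb)
    (hta : G.Adj t ta) (htb : G.Adj t tb) (htab : ta ≠ tb)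
    (hvC : G.Adj w vC)
    (houter : ∀ u ∈ ({sa, sb, ta, tb, vC} : Set V), u ≠ s ∧ u ≠ w ∧ u ≠ t)
    (c : Sym2 V → Fin 3)
    (hc : ProperOn (G.edgeSet \ {s(s, w), s(w, t)}) ({s, w, t} : Set V) c) :
    c s(s, sa) ≠ c s(s, sb) ↔ c s(t, ta) = c s(t, tb) := by
  classical
  obtain ⟨hsas, hsaw, hsat⟩ := houter sa (by simp)
  obtain ⟨hsbs, hsbw, hsbt⟩ := houter sb (by simp)
  obtain ⟨htas, htaw, htat⟩ := houter ta (by simp)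
  obtain ⟨htbs, htbw, htbt⟩ := houter tb (by simp)
  obtain ⟨hvCs, hvCw, hvCt⟩ := houter vC (by simp)
  have hsw' : s ≠ w := hsw.ne
  have hwt' : w ≠ t := hwt.ne
  have Ns : G.neighborFinset s = {sa, sb, w} :=
    nbhd_eq G (hcubic s) hsa hsb hsw hsab hsaw hsbw
  have Nw : G.neighborFinset w = {s, t, vC} :=
    nbhd_eq G (hcubic w) hsw.symm hwt hvC hst hvCs.symm hvCt.symm
  have Nt : G.neighborFinset t = {ta, tb, w} :=
    nbhd_eq G (hcubic t) hta htb hwt.symm htab htaw htbw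
  set P : V → Prop := fun v => v ≠ s ∧ v ≠ w ∧ v ≠ t with hP
  set I : Finset V := Finset.univ.filter P with hI
  -- edges from an interior vertex are never the two removed path edges
  have hnotpair : ∀ x y : V, P x → s(x, y) ∉ ({s(s, w), s(w, t)} : Set (Sym2 V)) := by
    intro x y hPx hmem
    simp only [Set.mem_insert_iff, Set.mem_singleton_iff, Sym2.eq_iff] at hmem
    obtain ⟨h1, h2, h3⟩ := hPx
    rcases hmem with (⟨rfl, rfl⟩ | ⟨rfl, rfl⟩) | (⟨rfl, rfl⟩ | ⟨rfl, rfl⟩)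
    exacts [h1 rfl, h2 rfl, h2 rfl, h3 rfl]
  -- properness gives injectivity of colors around each interior vertex
  have hinj : ∀ v, P v → ∀ u ∈ G.neighborFinset v, ∀ u' ∈ G.neighborFinset v,
      c s(v, u) = c s(v, u') → u = u' := by
    intro v hv u hu u' hu' hcc
    rw [SimpleGraph.mem_neighborFinset] at hu hu'
    by_contra hnee
    refine hc s(v, u) ⟨hu, hnotpair v u hv⟩ s(v, u') ⟨hu', hnotpair v u' hv⟩ ?_
      ⟨v, ?_, Sym2.mem_iff.mpr (Or.inl rfl), Sym2.mem_iff.mpr (Or.inl rfl)⟩ hcc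
    · intro hEq
      rw [Sym2.eq_iff] at hEq
      rcases hEq with ⟨-, h⟩ | ⟨h, -⟩
      exacts [hnee h, hu'.ne h]
    · simp only [Set.mem_insert_iff, Set.mem_singleton_iff]
      push_neg
      exact hv
  -- total sum over interior vertices vanishes
  have hT : ∑ v ∈ I, ∑ u ∈ G.neighborFinset v, f (c s(v, u)) = 0 :=
    Finset.sum_eq_zero fun v hv => sum_nbhd_zero G c (hcubic v)
      (hinj v (by simpa [hI] using hv))
  -- the interior-interior part vanishes by the swap involution
  have hT2 : ∑ v ∈ I, ∑ u ∈ (G.neighborFinset v).filter P, f (c s(v, u)) = 0 := by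
    rw [Finset.sum_sigma']
    refine Finset.sum_involution (fun p _ => ⟨p.2, p.1⟩) ?_ ?_ ?_ ?_
    · intro p hp
      rw [Sym2.eq_swap (a := p.2) (b := p.1)]
      exact self_add_self _
    · intro p hp _
      rw [Finset.mem_sigma] at hp
      obtain ⟨hp1, hp2⟩ := hp
      rw [Finset.mem_filter, SimpleGraph.mem_neighborFinset] at hp2
      intro hEq
      exact hp2.1.ne (congrArg Sigma.fst hEq).symm
    · intro p hp
      rw [Finset.mem_sigma] at hp ⊢
      obtain ⟨hp1, hp2⟩ := hp
      rw [Finset.mem_filter, SimpleGraph.mem_neighborFinset] at hp2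
      constructor
      · simp only [hI, Finset.mem_filter, Finset.mem_univ, true_and]
        exact hp2.2
      · rw [Finset.mem_filter, SimpleGraph.mem_neighborFinset]
        exact ⟨hp2.1.symm, by simpa [hI] using hp1⟩
    · intro p hp
      cases p
      rfl
  have hsplit : ∑ v ∈ I, ∑ u ∈ (G.neighborFinset v).filter P, f (c s(v, u))
      + ∑ v ∈ I, ∑ u ∈ (G.neighborFinset v).filter (fun u => ¬ P u), f (c s(v, u))
      = ∑ v ∈ I, ∑ u ∈ G.neighborFinset v, f (c s(v, u)) := by
    rw [← Finset.sum_add_distrib]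
    exact Finset.sum_congr rfl fun v _ => Finset.sum_filter_add_sum_filter_not _ _ _
  have hT1 : ∑ v ∈ I, ∑ u ∈ (G.neighborFinset v).filter (fun u => ¬ P u), f (c s(v, u)) = 0 := by
    rw [hT2, zero_add] at hsplit
    exact hsplit.trans hT
  have hstep : ∀ v ∈ I, ∑ u ∈ (G.neighborFinset v).filter (fun u => ¬ P u), f (c s(v, u))
      = ∑ u ∈ ({s, w, t} : Finset V), if u ∈ G.neighborFinset v then f (c s(v, u)) else 0 := by
    intro v _
    rw [← Finset.sum_filter]
    refine Finset.sum_congr ?_ fun _ _ => rfl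
    ext u
    simp only [Finset.mem_filter, Finset.mem_insert, Finset.mem_singleton, hP]
    tauto
  rw [Finset.sum_congr rfl hstep, Finset.sum_comm] at hT1
  have hIsum : ∀ u : V, ∑ v ∈ I, (if u ∈ G.neighborFinset v then f (c s(v, u)) else 0)
      = ∑ v ∈ I.filter (fun v => u ∈ G.neighborFinset v), f (c s(v, u)) :=
    fun u => (Finset.sum_filter _ _).symm
  rw [Finset.sum_congr rfl (fun u _ => hIsum u)] at hT1
  have hFs : I.filter (fun v => s ∈ G.neighborFinset v) = ({sa, sb} : Finset V) := by
    ext v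
    simp only [hI, Finset.mem_filter, Finset.mem_univ, true_and, SimpleGraph.mem_neighborFinset,
      Finset.mem_insert, Finset.mem_singleton, hP]
    constructor
    · rintro ⟨⟨h1, h2, h3⟩, hadj⟩
      have hv : v ∈ G.neighborFinset s := by
        rw [SimpleGraph.mem_neighborFinset]; exact hadj.symm
      rw [Ns] at hv
      simp only [Finset.mem_insert, Finset.mem_singleton] at hv
      rcases hv with rfl | rfl | rfl
      · exact Or.inl rfl
      · exact Or.inr rfl
      · exact absurd rfl h2
    · rintro (rfl | rfl)
      · exact ⟨⟨hsas, hsaw, hsat⟩, hsa.symm⟩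
      · exact ⟨⟨hsbs, hsbw, hsbt⟩, hsb.symm⟩
  have hFw : I.filter (fun v => w ∈ G.neighborFinset v) = ({vC} : Finset V) := by
    ext v
    simp only [hI, Finset.mem_filter, Finset.mem_univ, true_and, SimpleGraph.mem_neighborFinset,
      Finset.mem_singleton, hP]
    constructor
    · rintro ⟨⟨h1, h2, h3⟩, hadj⟩
      have hv : v ∈ G.neighborFinset w := by
        rw [SimpleGraph.mem_neighborFinset]; exact hadj.symm
      rw [Nw] at hv
      simp only [Finset.mem_insert, Finset.mem_singleton] at hv
      rcases hv with rfl | rfl | rfl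
      · exact absurd rfl h1
      · exact absurd rfl h3
      · rfl
    · rintro rfl
      exact ⟨⟨hvCs, hvCw, hvCt⟩, hvC.symm⟩
  have hFt : I.filter (fun v => t ∈ G.neighborFinset v) = ({ta, tb} : Finset V) := by
    ext v
    simp only [hI, Finset.mem_filter, Finset.mem_univ, true_and, SimpleGraph.mem_neighborFinset,
      Finset.mem_insert, Finset.mem_singleton, hP]
    constructor
    · rintro ⟨⟨h1, h2, h3⟩, hadj⟩
      have hv : v ∈ G.neighborFinset t := by
        rw [SimpleGraph.mem_neighborFinset]; exact hadj.symm
      rw [Nt] at hv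
      simp only [Finset.mem_insert, Finset.mem_singleton] at hv
      rcases hv with rfl | rfl | rfl
      · exact Or.inl rfl
      · exact Or.inr rfl
      · exact absurd rfl h2
    · rintro (rfl | rfl)
      · exact ⟨⟨htas, htaw, htat⟩, hta.symm⟩
      · exact ⟨⟨htbs, htbw, htbt⟩, htb.symm⟩
  rw [Finset.sum_insert (by simp [hsw', hst]), Finset.sum_insert (by simp [hwt']),
    Finset.sum_singleton, hFs, hFw, hFt,
    Finset.sum_insert (by simp [hsab]), Finset.sum_singleton, Finset.sum_singleton,
    Finset.sum_insert (by simp [htab]), Finset.sum_singleton] at hT1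
  have hparity : f (c s(s, sa)) + f (c s(s, sb)) + f (c s(w, vC))
      + f (c s(t, ta)) + f (c s(t, tb)) = 0 := by
    rw [Sym2.eq_swap (a := s) (b := sa), Sym2.eq_swap (a := s) (b := sb),
      Sym2.eq_swap (a := w) (b := vC), Sym2.eq_swap (a := t) (b := ta),
      Sym2.eq_swap (a := t) (b := tb)]
    linear_combination hT1
  constructor
  · -- forward: A ≠ B → A' = B', by extending to a 3-edge-coloring of G otherwise
    intro hab
    by_contra ha'b'
    obtain ⟨h1, h2, h3, h4, h5, h6, h7⟩ :=
      key2 _ _ _ _ _ hparity hab ha'b'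
    have ne_sw_wt : s(s, w) ≠ s(w, t) := by
      intro hEQ; rw [Sym2.eq_iff] at hEQ; rcases hEQ with ((⟨h, -⟩ | ⟨h, -⟩)); exacts [hsw' h, hst h]
    have neA_sw : s(s, sa) ≠ s(s, w) := by
      intro hEQ; rw [Sym2.eq_iff] at hEQ; rcases hEQ with ((⟨-, h⟩ | ⟨h, -⟩)); exacts [hsaw h, hsw' h]
    have neA_wt : s(s, sa) ≠ s(w, t) := by
      intro hEQ; rw [Sym2.eq_iff] at hEQ; rcases hEQ with ((⟨h, -⟩ | ⟨h, -⟩)); exacts [hsw' h, hst h]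
    have neB_sw : s(s, sb) ≠ s(s, w) := by
      intro hEQ; rw [Sym2.eq_iff] at hEQ; rcases hEQ with ((⟨-, h⟩ | ⟨h, -⟩)); exacts [hsbw h, hsw' h]
    have neB_wt : s(s, sb) ≠ s(w, t) := by
      intro hEQ; rw [Sym2.eq_iff] at hEQ; rcases hEQ with ((⟨h, -⟩ | ⟨h, -⟩)); exacts [hsw' h, hst h]
    have neC_sw : s(w, vC) ≠ s(s, w) := by
      intro hEQ; rw [Sym2.eq_iff] at hEQ; rcases hEQ with ((⟨h, -⟩ | ⟨-, h⟩)); exacts [hsw' h.symm, hvCs h]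
    have neC_wt : s(w, vC) ≠ s(w, t) := by
      intro hEQ; rw [Sym2.eq_iff] at hEQ; rcases hEQ with ((⟨-, h⟩ | ⟨h, -⟩)); exacts [hvCt h, hwt' h]
    have neA'_sw : s(t, ta) ≠ s(s, w) := by
      intro hEQ; rw [Sym2.eq_iff] at hEQ; rcases hEQ with ((⟨h, -⟩ | ⟨h, -⟩)); exacts [hst h.symm, hwt' h.symm]
    have neA'_wt : s(t, ta) ≠ s(w, t) := by
      intro hEQ; rw [Sym2.eq_iff] at hEQ; rcases hEQ with ((⟨h, -⟩ | ⟨-, h⟩)); exacts [hwt' h.symm, htaw h]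
    have neB'_sw : s(t, tb) ≠ s(s, w) := by
      intro hEQ; rw [Sym2.eq_iff] at hEQ; rcases hEQ with ((⟨h, -⟩ | ⟨h, -⟩)); exacts [hst h.symm, hwt' h.symm]
    have neB'_wt : s(t, tb) ≠ s(w, t) := by
      intro hEQ; rw [Sym2.eq_iff] at hEQ; rcases hEQ with ((⟨h, -⟩ | ⟨-, h⟩)); exacts [hwt' h.symm, htbw h]
    obtain ⟨c', hc'sw, hc'wt, hc'gen⟩ : ∃ c' : Sym2 V → Fin 3,
        c' s(s, w) = -(c s(s, sa) + c s(s, sb)) ∧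
        c' s(w, t) = -(c s(t, ta) + c s(t, tb)) ∧
        ∀ e, e ≠ s(s, w) → e ≠ s(w, t) → c' e = c e :=
      ⟨fun e => if e = s(s, w) then -(c s(s, sa) + c s(s, sb))
        else if e = s(w, t) then -(c s(t, ta) + c s(t, tb)) else c e,
       by simp, by simp [Ne.symm ne_sw_wt], fun e k1 k2 => by simp [k1, k2]⟩
    have eA : c' s(s, sa) = c s(s, sa) := hc'gen _ neA_sw neA_wt
    have eB : c' s(s, sb) = c s(s, sb) := hc'gen _ neB_sw neB_wt
    have eC : c' s(w, vC) = c s(w, vC) := hc'gen _ neC_sw neC_wt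
    have eA' : c' s(t, ta) = c s(t, ta) := hc'gen _ neA'_sw neA'_wt
    have eB' : c' s(t, tb) = c s(t, tb) := hc'gen _ neB'_sw neB'_wt
    have esw2 : c' s(w, s) = -(c s(s, sa) + c s(s, sb)) := by
      rw [Sym2.eq_swap]; exact hc'sw
    have ewt2 : c' s(t, w) = -(c s(t, ta) + c s(t, tb)) := by
      rw [Sym2.eq_swap]; exact hc'wt
    have hba := hab.symm
    have hb'a' : c s(t, tb) ≠ c s(t, ta) := fun h => ha'b' h.symm
    have h1s := h1.symm
    have h2s := h2.symm
    have h3s := h3.symm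
    have h4s := h4.symm
    have h5s := h5.symm
    have h6s := h6.symm
    have h7s := h7.symm
    refine hsnark ⟨c', ?_⟩
    rintro e₁ he₁ e₂ he₂ hne ⟨v, -, hv1, hv2⟩
    by_cases hvs : v = s
    · subst hvs
      rcases edge_class G Ns e₁ he₁ hv1 with rfl | rfl | rfl <;>
        rcases edge_class G Ns e₂ he₂ hv2 with rfl | rfl | rfl <;>
        simp only [eA, eB, hc'sw] <;>
        first
          | exact absurd rfl hne
          | assumption
    · by_cases hvw : v = w
      · subst hvw
        rcases edge_class G Nw e₁ he₁ hv1 with rfl | rfl | rfl <;>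
          rcases edge_class G Nw e₂ he₂ hv2 with rfl | rfl | rfl <;>
          simp only [esw2, hc'wt, eC] <;>
          first
            | exact absurd rfl hne
            | assumption
      · by_cases hvt : v = t
        · subst hvt
          rcases edge_class G Nt e₁ he₁ hv1 with rfl | rfl | rfl <;>
            rcases edge_class G Nt e₂ he₂ hv2 with rfl | rfl | rfl <;>
            simp only [eA', eB', ewt2] <;>
            first
              | exact absurd rfl hne
              | assumption
        · have k1 : e₁ ≠ s(s, w) := fun h => by
            subst h; rcases Sym2.mem_iff.mp hv1 with rfl | rfl
            exacts [hvs rfl, hvw rfl]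
          have k2 : e₁ ≠ s(w, t) := fun h => by
            subst h; rcases Sym2.mem_iff.mp hv1 with rfl | rfl
            exacts [hvw rfl, hvt rfl]
          have k3 : e₂ ≠ s(s, w) := fun h => by
            subst h; rcases Sym2.mem_iff.mp hv2 with rfl | rfl
            exacts [hvs rfl, hvw rfl]
          have k4 : e₂ ≠ s(w, t) := fun h => by
            subst h; rcases Sym2.mem_iff.mp hv2 with rfl | rfl
            exacts [hvw rfl, hvt rfl]
          rw [hc'gen e₁ k1 k2, hc'gen e₂ k3 k4]
          refine hc e₁ ⟨he₁, ?_⟩ e₂ ⟨he₂, ?_⟩ hne ⟨v, ?_, hv1, hv2⟩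
          · simp only [Set.mem_insert_iff, Set.mem_singleton_iff]
            push_neg
            exact ⟨k1, k2⟩
          · simp only [Set.mem_insert_iff, Set.mem_singleton_iff]
            push_neg
            exact ⟨k3, k4⟩
          · simp only [Set.mem_insert_iff, Set.mem_singleton_iff]
            push_neg
            exact ⟨hvs, hvw, hvt⟩
  · intro ha'b'
    exact key1 _ _ _ _ _ hparity ha'b'
end

section
/- Let S be a Loupekine 5-pole formed by removing a P_3 from a snark, and let m, a, c be positive integers with gcd(m, a, c) = 1 and m/gcd(a, m) odd. Then the Z_m lift S_α(m; a, a, c) obtained from the α-connection voltage graph (arrows A' → A and B' → B both labelled a, loop at w labelled c) is a snark. -/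
set_option synthInstance.maxSize 1000 in
set_option maxHeartbeats 1000000 in
/-- Finite color logic: parity of the five semiedge colors plus failure of all
reconnections forces `A = B ↔ ¬ (A' = B')`. -/
lemma colorLogic : ∀ (A B A' B' C : Fin 3),
    (∀ k : Fin 3,
      ((Finset.univ : Finset (Fin 5)).filter fun r => ![A, B, A', B', C] r = k).card % 2 = 1) →
    (¬ (A ≠ B ∧ A' ≠ B' ∧ ∃ x y : Fin 3,
      x ≠ y ∧ x ≠ A ∧ x ≠ B ∧ x ≠ C ∧ y ≠ A' ∧ y ≠ B' ∧ y ≠ C)) →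
    (A = B ↔ ¬ A' = B') := by decide

lemma even_card_of_invol {α : Type*} [DecidableEq α] :
    ∀ (s : Finset α) (f : α → α), (∀ x ∈ s, f x ∈ s) → (∀ x ∈ s, f (f x) = x) →
    (∀ x ∈ s, f x ≠ x) → Even s.card := by
  intro s
  induction s using Finset.strongInduction with
  | _ s ih =>
    intro f h1 h2 h3
    rcases s.eq_empty_or_nonempty with rfl | ⟨x, hx⟩
    · simp
    · have hfx := h1 x hx
      have hne : x ≠ f x := (h3 x hx).symm
      have hmem : x ∈ s.erase (f x) := Finset.mem_erase.mpr ⟨hne, hx⟩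
      set u : Finset α := (s.erase (f x)).erase x with hu
      have hss : u ⊂ s := by
        refine Finset.ssubset_of_subset_of_ssubset (Finset.erase_subset _ _) ?_
        exact Finset.erase_ssubset hfx
      have hcard : s.card = u.card + 2 := by
        rw [hu, Finset.card_erase_of_mem hmem, Finset.card_erase_of_mem hfx]
        have h1' : 0 < s.card := Finset.card_pos.mpr ⟨x, hx⟩
        have h2' : 1 < s.card := Finset.one_lt_card.mpr ⟨x, hx, f x, hfx, hne⟩
        omega
      have hsub : u ⊆ s := hss.subset
      have he : Even u.card := by
        refine ih u hss f ?_ ?_ ?_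
        · intro y hy
          obtain ⟨hy1, hy2, hy3⟩ : y ≠ x ∧ y ≠ f x ∧ y ∈ s := by
            simp only [hu, Finset.mem_erase] at hy; tauto
          have hfy := h1 y hy3
          simp only [hu, Finset.mem_erase]
          refine ⟨?_, ?_, hfy⟩
          · intro h; exact hy2 ((h2 y hy3).symm.trans (congrArg f h))
          · intro h
            exact hy1 (((h2 y hy3).symm.trans (congrArg f h)).trans (h2 x hx))
        · intro y hy; exact h2 y (hsub hy)
        · intro y hy; exact h3 y (hsub hy)
      rcases he with ⟨j, hj⟩
      exact ⟨j + 1, by omega⟩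

/-- **Cyclic Loupekine snarks.** Let `S` be the Loupekine 5-pole obtained from a
snark `G` by removing the path `s — w — t` (dangling edges `A = s·sa`, `B = s·sb`
at `s`, `A' = t·ta`, `B' = t·tb` at `t`, `C = w·vC` at `w`).  If
`gcd(m, a, c) = 1` and `m / gcd(a, m)` is odd, then the `ZMod m` lift
`S_α(m; a, a, c)` of the α-connection voltage graph (arrows `A' → A` and
`B' → B` labelled `a`, loop at the reused center `w` labelled `c`) is a snark,
i.e. it has no proper 3-edge-coloring. -/
theorem cyclic_loupekine_snark {U : Type*} [Fintype U] [DecidableEq U]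
    (G : SimpleGraph U) [DecidableRel G.Adj]
    (hcubic : ∀ v : U, G.degree v = 3)
    (hsnark : ¬ ∃ c : Sym2 U → Fin 3, ProperOn G.edgeSet (∅ : Set U) c)
    (s w t sa sb ta tb vC : U)
    (hsw : G.Adj s w) (hwt : G.Adj w t) (hst : s ≠ t)
    (hsa : G.Adj s sa) (hsb : G.Adj s sb) (hsab : sa ≠ sb)
    (hta : G.Adj t ta) (htb : G.Adj t tb) (htab : ta ≠ tb)
    (hvC : G.Adj w vC)
    (houter : ∀ u ∈ ({sa, sb, ta, tb, vC} : Set U), u ≠ s ∧ u ≠ w ∧ u ≠ t)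
    (m a c : ℕ) [NeZero m]
    (ha1 : 1 ≤ a) (ha2 : a < m) (hc1 : 1 ≤ c) (hc2 : 2 * c < m)
    (hgcd : Nat.gcd m (Nat.gcd a c) = 1)
    (hodd : Odd (m / Nat.gcd a m))
    (H : SimpleGraph (U × ZMod m))
    -- in each cluster: the 5-pole together with the spoke edge (w,i)-(vC,i)
    (hint : ∀ (i : ZMod m) (u u' : U),
      H.Adj (u, i) (u', i) ↔ (G.Adj u u' ∧ u ≠ s ∧ u ≠ t ∧ u' ≠ s ∧ u' ≠ t))
    -- between clusters: the α-connecting edges of skip a, and the loop edges of skip c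
    (hcross : ∀ (i j : ZMod m), i ≠ j → ∀ u u' : U,
      H.Adj (u, i) (u', j) ↔
        ((j = i + (a : ZMod m) ∧ ((u = ta ∧ u' = sa) ∨ (u = tb ∧ u' = sb))) ∨
         (i = j + (a : ZMod m) ∧ ((u' = ta ∧ u = sa) ∨ (u' = tb ∧ u = sb))) ∨
         (u = w ∧ u' = w ∧ (j = i + (c : ZMod m) ∨ i = j + (c : ZMod m))))) :
    ¬ ∃ col : Sym2 (U × ZMod m) → Fin 3,
        ProperOn H.edgeSet (∅ : Set (U × ZMod m)) col := by
  rintro ⟨col, hcol⟩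
  -- basic facts about the special vertices
  obtain ⟨hsas, hsaw, hsat⟩ := houter sa (by simp)
  obtain ⟨hsbs, hsbw, hsbt⟩ := houter sb (by simp)
  obtain ⟨htas, htaw, htat⟩ := houter ta (by simp)
  obtain ⟨htbs, htbw, htbt⟩ := houter tb (by simp)
  obtain ⟨hvCs, hvCw, hvCt⟩ := houter vC (by simp)
  have hswne : s ≠ w := hsw.ne
  have hwtne : w ≠ t := hwt.ne
  -- the neighborhoods of s, w, t
  have key : ∀ (v x y z : U), G.Adj v x → G.Adj v y → G.Adj v z → x ≠ y → x ≠ z → y ≠ z →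
      ∀ u, G.Adj v u → (u = x ∨ u = y ∨ u = z) := by
    intro v x y z h1 h2 h3 hxy hxz hyz u hu
    by_contra hcon
    push_neg at hcon
    obtain ⟨c1, c2, c3⟩ := hcon
    have hsub : ({u, x, y, z} : Finset U) ⊆ G.neighborFinset v := by
      intro p hp
      simp only [Finset.mem_insert, Finset.mem_singleton] at hp
      rw [SimpleGraph.mem_neighborFinset]
      rcases hp with rfl | rfl | rfl | rfl <;> assumption
    have hc4 : ({u, x, y, z} : Finset U).card = 4 := by
      rw [Finset.card_insert_of_notMem (by simp [c1, c2, c3]),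
        Finset.card_insert_of_notMem (by simp [hxy, hxz]),
        Finset.card_insert_of_notMem (by simp [hyz]), Finset.card_singleton]
    have hle := Finset.card_le_card hsub
    rw [hc4, SimpleGraph.card_neighborFinset_eq_degree, hcubic v] at hle
    omega
  have hNs : ∀ u, G.Adj s u → (u = sa ∨ u = sb ∨ u = w) :=
    key s sa sb w hsa hsb hsw hsab hsaw hsbw
  have hNt : ∀ u, G.Adj t u → (u = ta ∨ u = tb ∨ u = w) :=
    key t ta tb w hta htb hwt.symm htab htaw htbw
  have hNw : ∀ u, G.Adj w u → (u = s ∨ u = t ∨ u = vC) :=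
    key w s t vC hsw.symm hwt hvC hst (Ne.symm hvCs) (Ne.symm hvCt)
  -- arithmetic facts in `ZMod m`
  set α : ZMod m := (a : ZMod m) with hαdef
  have haz : α ≠ 0 := by
    rw [hαdef, Ne, ZMod.natCast_eq_zero_iff]
    intro hdvd
    have := Nat.le_of_dvd (by omega) hdvd
    omega
  have h2az : α + α ≠ 0 := by
    rw [hαdef, ← Nat.cast_add, Ne, ZMod.natCast_eq_zero_iff]
    intro hdvd
    have hle := Nat.le_of_dvd (by omega) hdvd
    have hdvd2 : m ∣ a + a - m := Nat.dvd_sub hdvd dvd_rfl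
    have h1 : a + a - m = 0 := by
      by_contra hne0
      have := Nat.le_of_dvd (Nat.pos_of_ne_zero hne0) hdvd2
      omega
    have h1' : a + a = m := by omega
    have hg : Nat.gcd a m = a := by
      rw [← h1']
      simpa using Nat.gcd_add_self_right a a
    rw [hg, ← h1'] at hodd
    have : (a + a) / a = 2 := by
      rw [show a + a = 2 * a by ring, Nat.mul_div_cancel _ (by omega)]
    rw [this] at hodd
    exact (Nat.not_odd_iff_even.mpr (by decide)) hodd
  have hL3 : ∀ i : ZMod m, i + α ≠ i := fun i h => haz (by
    have := left_eq_add.mp h.symm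
    exact this)
  have hL2 : ∀ i : ZMod m, i - α ≠ i := fun i h => haz (by
    have := sub_eq_self.mp h
    exact this)
  have hL1 : ∀ i : ZMod m, i - α ≠ i + α := by
    intro i h
    apply h2az
    have : i = i + α + α := by
      rw [← h]; ring
    rw [add_assoc] at this
    exact (left_eq_add.mp this)
  -- the three boundary color functions
  set A : ZMod m → Fin 3 := fun i => col s((ta, i), (sa, i + α)) with hAdef
  set B : ZMod m → Fin 3 := fun i => col s((tb, i), (sb, i + α)) with hBdef
  set D : ZMod m → Fin 3 := fun i => col s((vC, i), (w, i)) with hDdef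
  -- adjacency facts in H
  have hintAdj : ∀ (i : ZMod m) (u v : U), G.Adj u v → u ≠ s → u ≠ t → v ≠ s → v ≠ t →
      H.Adj (u, i) (v, i) := fun i u v h h1 h2 h3 h4 => (hint i u v).mpr ⟨h, h1, h2, h3, h4⟩
  have hadjA : ∀ j : ZMod m, H.Adj (ta, j) (sa, j + α) := by
    intro j
    exact (hcross j (j + α) (Ne.symm (hL3 j)) ta sa).mpr (Or.inl ⟨rfl, Or.inl ⟨rfl, rfl⟩⟩)
  have hadjB : ∀ j : ZMod m, H.Adj (tb, j) (sb, j + α) := by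
    intro j
    exact (hcross j (j + α) (Ne.symm (hL3 j)) tb sb).mpr (Or.inl ⟨rfl, Or.inr ⟨rfl, rfl⟩⟩)
  have hsac : ∀ j : ZMod m, j - α + α = j := fun j => by ring
  have hadjA' : ∀ j : ZMod m, H.Adj (sa, j) (ta, j - α) := by
    intro j
    have := (hadjA (j - α)).symm
    rwa [hsac j] at this
  have hadjB' : ∀ j : ZMod m, H.Adj (sb, j) (tb, j - α) := by
    intro j
    have := (hadjB (j - α)).symm
    rwa [hsac j] at this
  have hadjD : ∀ j : ZMod m, H.Adj (vC, j) (w, j) :=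
    fun j => hintAdj j vC w hvC.symm hvCs hvCt hswne.symm hwtne
  -- color identities
  have colA' : ∀ j : ZMod m, col s((sa, j), (ta, j - α)) = A (j - α) := by
    intro j
    rw [hAdef]
    simp only
    rw [hsac j, Sym2.eq_swap]
  have colB' : ∀ j : ZMod m, col s((sb, j), (tb, j - α)) = B (j - α) := by
    intro j
    rw [hBdef]
    simp only
    rw [hsac j, Sym2.eq_swap]
  -- proper coloring: distinct colors on distinct edges at a common vertex
  have distinctCol : ∀ {x y z : U × ZMod m}, H.Adj x y → H.Adj x z → y ≠ z →
      col s(x, y) ≠ col s(x, z) := by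
    intro x y z h1 h2 hyz
    refine hcol _ (H.mem_edgeSet.mpr h1) _ (H.mem_edgeSet.mpr h2) ?_
      ⟨x, by simp, Sym2.mem_mk_left x y, Sym2.mem_mk_left x z⟩
    intro heq
    rcases Sym2.eq_iff.mp heq with ⟨-, h⟩ | ⟨h', h⟩
    · exact hyz h
    · exact hyz (h.trans h')
  -- every internal vertex has three distinct H-neighbors
  have three : ∀ (i : ZMod m) (u : U), u ≠ s → u ≠ w → u ≠ t →
      ∃ p q r : U × ZMod m, p ≠ q ∧ p ≠ r ∧ q ≠ r ∧
        H.Adj (u, i) p ∧ H.Adj (u, i) q ∧ H.Adj (u, i) r := by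
    intro i u hus huw hut
    have hNu : (G.neighborFinset u).card = 3 := by
      rw [SimpleGraph.card_neighborFinset_eq_degree, hcubic u]
    have hnbr_s : ∀ v, G.Adj u v → v = s → (u = sa ∨ u = sb) := by
      intro v hv hvs; subst hvs
      rcases hNs u hv.symm with h | h | h
      · exact Or.inl h
      · exact Or.inr h
      · exact absurd h huw
    have hnbr_t : ∀ v, G.Adj u v → v = t → (u = ta ∨ u = tb) := by
      intro v hv hvt; subst hvt
      rcases hNt u hv.symm with h | h | h
      · exact Or.inl h
      · exact Or.inr h
      · exact absurd h huw
    have hsnd2 : ∀ (x : U), (x, i) ≠ (ta, i - α) ∧ (x, i) ≠ (tb, i - α) := by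
      intro x
      constructor <;> exact fun h => hL2 i ((congrArg Prod.snd h).symm)
    have hsnd3 : ∀ (x : U), (x, i) ≠ (sa, i + α) ∧ (x, i) ≠ (sb, i + α) := by
      intro x
      constructor <;> exact fun h => hL3 i ((congrArg Prod.snd h).symm)
    have hsnd1 : ∀ (x y : U), (x, i - α) ≠ (y, i + α) :=
      fun x y h => hL1 i (congrArg Prod.snd h)
    -- case analysis on the roles of u
    by_cases h1 : u = sa
    · have hadjus : G.Adj u s := by rw [h1]; exact hsa.symm
      have hcrossL : H.Adj (u, i) (ta, i - α) := by rw [h1]; exact hadjA' i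
      by_cases h3 : u = ta
      · -- u = sa = ta
        have hadjut : G.Adj u t := by rw [h3]; exact hta.symm
        have hmem_s : s ∈ G.neighborFinset u := by
          rw [SimpleGraph.mem_neighborFinset]; exact hadjus
        have hmem_t : t ∈ (G.neighborFinset u).erase s :=
          Finset.mem_erase.mpr ⟨Ne.symm hst, by
            rw [SimpleGraph.mem_neighborFinset]; exact hadjut⟩
        have hcard : (((G.neighborFinset u).erase s).erase t).card = 1 := by
          rw [Finset.card_erase_of_mem hmem_t, Finset.card_erase_of_mem hmem_s, hNu]
        obtain ⟨x, hx⟩ := Finset.card_eq_one.mp hcard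
        have hxmem : x ∈ ((G.neighborFinset u).erase s).erase t := by rw [hx]; simp
        obtain ⟨hxt, hxs, hxadj⟩ : x ≠ t ∧ x ≠ s ∧ G.Adj u x := by
          simp only [Finset.mem_erase, SimpleGraph.mem_neighborFinset] at hxmem; tauto
        exact ⟨(x, i), (ta, i - α), (sa, i + α), (hsnd2 x).1, (hsnd3 x).1, hsnd1 ta sa,
          hintAdj i u x hxadj hus hut hxs hxt, hcrossL, by rw [h3]; exact hadjA i⟩
      · by_cases h4 : u = tb
        · -- u = sa = tb
          have hadjut : G.Adj u t := by rw [h4]; exact htb.symm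
          have hmem_s : s ∈ G.neighborFinset u := by
            rw [SimpleGraph.mem_neighborFinset]; exact hadjus
          have hmem_t : t ∈ (G.neighborFinset u).erase s :=
            Finset.mem_erase.mpr ⟨Ne.symm hst, by
              rw [SimpleGraph.mem_neighborFinset]; exact hadjut⟩
          have hcard : (((G.neighborFinset u).erase s).erase t).card = 1 := by
            rw [Finset.card_erase_of_mem hmem_t, Finset.card_erase_of_mem hmem_s, hNu]
          obtain ⟨x, hx⟩ := Finset.card_eq_one.mp hcard
          have hxmem : x ∈ ((G.neighborFinset u).erase s).erase t := by rw [hx]; simp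
          obtain ⟨hxt, hxs, hxadj⟩ : x ≠ t ∧ x ≠ s ∧ G.Adj u x := by
            simp only [Finset.mem_erase, SimpleGraph.mem_neighborFinset] at hxmem; tauto
          exact ⟨(x, i), (ta, i - α), (sb, i + α), (hsnd2 x).1, (hsnd3 x).2, hsnd1 ta sb,
            hintAdj i u x hxadj hus hut hxs hxt, hcrossL, by rw [h4]; exact hadjB i⟩
        · -- u = sa only
          have hmem_s : s ∈ G.neighborFinset u := by
            rw [SimpleGraph.mem_neighborFinset]; exact hadjus
          have hcard : ((G.neighborFinset u).erase s).card = 2 := by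
            rw [Finset.card_erase_of_mem hmem_s, hNu]
          obtain ⟨x, y, hxy, hset⟩ := Finset.card_eq_two.mp hcard
          have hxmem : x ∈ (G.neighborFinset u).erase s := by rw [hset]; simp
          have hymem : y ∈ (G.neighborFinset u).erase s := by rw [hset]; simp
          obtain ⟨hxs, hxadj⟩ : x ≠ s ∧ G.Adj u x := by
            simp only [Finset.mem_erase, SimpleGraph.mem_neighborFinset] at hxmem; tauto
          obtain ⟨hys, hyadj⟩ : y ≠ s ∧ G.Adj u y := by
            simp only [Finset.mem_erase, SimpleGraph.mem_neighborFinset] at hymem; tauto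
          have hxt : x ≠ t := fun hh => by
            rcases hnbr_t x hxadj hh with h | h; exacts [h3 h, h4 h]
          have hyt : y ≠ t := fun hh => by
            rcases hnbr_t y hyadj hh with h | h; exacts [h3 h, h4 h]
          exact ⟨(x, i), (y, i), (ta, i - α), by simp [Prod.ext_iff, hxy],
            (hsnd2 x).1, (hsnd2 y).1,
            hintAdj i u x hxadj hus hut hxs hxt, hintAdj i u y hyadj hus hut hys hyt, hcrossL⟩
    · by_cases h2 : u = sb
      · have hadjus : G.Adj u s := by rw [h2]; exact hsb.symm
        have hcrossL : H.Adj (u, i) (tb, i - α) := by rw [h2]; exact hadjB' i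
        by_cases h3 : u = ta
        · -- u = sb = ta
          have hadjut : G.Adj u t := by rw [h3]; exact hta.symm
          have hmem_s : s ∈ G.neighborFinset u := by
            rw [SimpleGraph.mem_neighborFinset]; exact hadjus
          have hmem_t : t ∈ (G.neighborFinset u).erase s :=
            Finset.mem_erase.mpr ⟨Ne.symm hst, by
              rw [SimpleGraph.mem_neighborFinset]; exact hadjut⟩
          have hcard : (((G.neighborFinset u).erase s).erase t).card = 1 := by
            rw [Finset.card_erase_of_mem hmem_t, Finset.card_erase_of_mem hmem_s, hNu]
          obtain ⟨x, hx⟩ := Finset.card_eq_one.mp hcard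
          have hxmem : x ∈ ((G.neighborFinset u).erase s).erase t := by rw [hx]; simp
          obtain ⟨hxt, hxs, hxadj⟩ : x ≠ t ∧ x ≠ s ∧ G.Adj u x := by
            simp only [Finset.mem_erase, SimpleGraph.mem_neighborFinset] at hxmem; tauto
          exact ⟨(x, i), (tb, i - α), (sa, i + α), (hsnd2 x).2, (hsnd3 x).1, hsnd1 tb sa,
            hintAdj i u x hxadj hus hut hxs hxt, hcrossL, by rw [h3]; exact hadjA i⟩
        · by_cases h4 : u = tb
          · -- u = sb = tb
            have hadjut : G.Adj u t := by rw [h4]; exact htb.symm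
            have hmem_s : s ∈ G.neighborFinset u := by
              rw [SimpleGraph.mem_neighborFinset]; exact hadjus
            have hmem_t : t ∈ (G.neighborFinset u).erase s :=
              Finset.mem_erase.mpr ⟨Ne.symm hst, by
                rw [SimpleGraph.mem_neighborFinset]; exact hadjut⟩
            have hcard : (((G.neighborFinset u).erase s).erase t).card = 1 := by
              rw [Finset.card_erase_of_mem hmem_t, Finset.card_erase_of_mem hmem_s, hNu]
            obtain ⟨x, hx⟩ := Finset.card_eq_one.mp hcard
            have hxmem : x ∈ ((G.neighborFinset u).erase s).erase t := by rw [hx]; simp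
            obtain ⟨hxt, hxs, hxadj⟩ : x ≠ t ∧ x ≠ s ∧ G.Adj u x := by
              simp only [Finset.mem_erase, SimpleGraph.mem_neighborFinset] at hxmem; tauto
            exact ⟨(x, i), (tb, i - α), (sb, i + α), (hsnd2 x).2, (hsnd3 x).2, hsnd1 tb sb,
              hintAdj i u x hxadj hus hut hxs hxt, hcrossL, by rw [h4]; exact hadjB i⟩
          · -- u = sb only
            have hmem_s : s ∈ G.neighborFinset u := by
              rw [SimpleGraph.mem_neighborFinset]; exact hadjus
            have hcard : ((G.neighborFinset u).erase s).card = 2 := by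
              rw [Finset.card_erase_of_mem hmem_s, hNu]
            obtain ⟨x, y, hxy, hset⟩ := Finset.card_eq_two.mp hcard
            have hxmem : x ∈ (G.neighborFinset u).erase s := by rw [hset]; simp
            have hymem : y ∈ (G.neighborFinset u).erase s := by rw [hset]; simp
            obtain ⟨hxs, hxadj⟩ : x ≠ s ∧ G.Adj u x := by
              simp only [Finset.mem_erase, SimpleGraph.mem_neighborFinset] at hxmem; tauto
            obtain ⟨hys, hyadj⟩ : y ≠ s ∧ G.Adj u y := by
              simp only [Finset.mem_erase, SimpleGraph.mem_neighborFinset] at hymem; tauto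
            have hxt : x ≠ t := fun hh => by
              rcases hnbr_t x hxadj hh with h | h; exacts [h3 h, h4 h]
            have hyt : y ≠ t := fun hh => by
              rcases hnbr_t y hyadj hh with h | h; exacts [h3 h, h4 h]
            exact ⟨(x, i), (y, i), (tb, i - α), by simp [Prod.ext_iff, hxy],
              (hsnd2 x).2, (hsnd2 y).2,
              hintAdj i u x hxadj hus hut hxs hxt, hintAdj i u y hyadj hus hut hys hyt, hcrossL⟩
      · -- u is not sa nor sb
        by_cases h3 : u = ta
        · have hadjut : G.Adj u t := by rw [h3]; exact hta.symm
          have hmem_t : t ∈ G.neighborFinset u := by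
            rw [SimpleGraph.mem_neighborFinset]; exact hadjut
          have hcard : ((G.neighborFinset u).erase t).card = 2 := by
            rw [Finset.card_erase_of_mem hmem_t, hNu]
          obtain ⟨x, y, hxy, hset⟩ := Finset.card_eq_two.mp hcard
          have hxmem : x ∈ (G.neighborFinset u).erase t := by rw [hset]; simp
          have hymem : y ∈ (G.neighborFinset u).erase t := by rw [hset]; simp
          obtain ⟨hxt, hxadj⟩ : x ≠ t ∧ G.Adj u x := by
            simp only [Finset.mem_erase, SimpleGraph.mem_neighborFinset] at hxmem; tauto
          obtain ⟨hyt, hyadj⟩ : y ≠ t ∧ G.Adj u y := by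
            simp only [Finset.mem_erase, SimpleGraph.mem_neighborFinset] at hymem; tauto
          have hxs : x ≠ s := fun hh => by
            rcases hnbr_s x hxadj hh with h | h; exacts [h1 h, h2 h]
          have hys : y ≠ s := fun hh => by
            rcases hnbr_s y hyadj hh with h | h; exacts [h1 h, h2 h]
          exact ⟨(x, i), (y, i), (sa, i + α), by simp [Prod.ext_iff, hxy],
            (hsnd3 x).1, (hsnd3 y).1,
            hintAdj i u x hxadj hus hut hxs hxt, hintAdj i u y hyadj hus hut hys hyt,
            by rw [h3]; exact hadjA i⟩
        · by_cases h4 : u = tb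
          · have hadjut : G.Adj u t := by rw [h4]; exact htb.symm
            have hmem_t : t ∈ G.neighborFinset u := by
              rw [SimpleGraph.mem_neighborFinset]; exact hadjut
            have hcard : ((G.neighborFinset u).erase t).card = 2 := by
              rw [Finset.card_erase_of_mem hmem_t, hNu]
            obtain ⟨x, y, hxy, hset⟩ := Finset.card_eq_two.mp hcard
            have hxmem : x ∈ (G.neighborFinset u).erase t := by rw [hset]; simp
            have hymem : y ∈ (G.neighborFinset u).erase t := by rw [hset]; simp
            obtain ⟨hxt, hxadj⟩ : x ≠ t ∧ G.Adj u x := by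
              simp only [Finset.mem_erase, SimpleGraph.mem_neighborFinset] at hxmem; tauto
            obtain ⟨hyt, hyadj⟩ : y ≠ t ∧ G.Adj u y := by
              simp only [Finset.mem_erase, SimpleGraph.mem_neighborFinset] at hymem; tauto
            have hxs : x ≠ s := fun hh => by
              rcases hnbr_s x hxadj hh with h | h; exacts [h1 h, h2 h]
            have hys : y ≠ s := fun hh => by
              rcases hnbr_s y hyadj hh with h | h; exacts [h1 h, h2 h]
            exact ⟨(x, i), (y, i), (sb, i + α), by simp [Prod.ext_iff, hxy],
              (hsnd3 x).2, (hsnd3 y).2,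
              hintAdj i u x hxadj hus hut hxs hxt, hintAdj i u y hyadj hus hut hys hyt,
              by rw [h4]; exact hadjB i⟩
          · -- no roles
            obtain ⟨x, y, z, hxy, hxz, hyz, hset⟩ := Finset.card_eq_three.mp hNu
            have hxmem : x ∈ G.neighborFinset u := by rw [hset]; simp
            have hymem : y ∈ G.neighborFinset u := by rw [hset]; simp
            have hzmem : z ∈ G.neighborFinset u := by rw [hset]; simp
            rw [SimpleGraph.mem_neighborFinset] at hxmem hymem hzmem
            have hxs : x ≠ s := fun hh => by
              rcases hnbr_s x hxmem hh with h | h; exacts [h1 h, h2 h]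
            have hys : y ≠ s := fun hh => by
              rcases hnbr_s y hymem hh with h | h; exacts [h1 h, h2 h]
            have hzs : z ≠ s := fun hh => by
              rcases hnbr_s z hzmem hh with h | h; exacts [h1 h, h2 h]
            have hxt : x ≠ t := fun hh => by
              rcases hnbr_t x hxmem hh with h | h; exacts [h3 h, h4 h]
            have hyt : y ≠ t := fun hh => by
              rcases hnbr_t y hymem hh with h | h; exacts [h3 h, h4 h]
            have hzt : z ≠ t := fun hh => by
              rcases hnbr_t z hzmem hh with h | h; exacts [h3 h, h4 h]
            exact ⟨(x, i), (y, i), (z, i), by simp [Prod.ext_iff, hxy],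
              by simp [Prod.ext_iff, hxz], by simp [Prod.ext_iff, hyz],
              hintAdj i u x hxmem hus hut hxs hxt, hintAdj i u y hymem hus hut hys hyt,
              hintAdj i u z hzmem hus hut hzs hzt⟩
  -- every internal vertex has exactly one neighbor of each color
  have one : ∀ (i : ZMod m) (u : U), u ≠ s → u ≠ w → u ≠ t → ∀ k : Fin 3,
      ∃ x, H.Adj (u, i) x ∧ col s((u, i), x) = k ∧
        ∀ y, H.Adj (u, i) y → col s((u, i), y) = k → y = x := by
    intro i u hus huw hut k
    obtain ⟨p, q, r, hpq, hpr, hqr, h1, h2, h3⟩ := three i u hus huw hut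
    have c12 := distinctCol h1 h2 hpq
    have c13 := distinctCol h1 h3 hpr
    have c23 := distinctCol h2 h3 hqr
    have hk : k = col s((u, i), p) ∨ k = col s((u, i), q) ∨ k = col s((u, i), r) := by
      have hcov : ∀ p' q' r' k' : Fin 3, p' ≠ q' → p' ≠ r' → q' ≠ r' →
          k' = p' ∨ k' = q' ∨ k' = r' := by decide
      exact hcov _ _ _ k c12 c13 c23
    have uniq : ∀ x, H.Adj (u, i) x → col s((u, i), x) = k →
        ∀ y, H.Adj (u, i) y → col s((u, i), y) = k → y = x := by
      intro x hax hcx y hay hcy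
      by_contra hne
      exact distinctCol hay hax hne (hcy.trans hcx.symm)
    rcases hk with hk | hk | hk
    · exact ⟨p, h1, hk.symm, uniq p h1 hk.symm⟩
    · exact ⟨q, h2, hk.symm, uniq q h2 hk.symm⟩
    · exact ⟨r, h3, hk.symm, uniq r h3 hk.symm⟩
  -- the parity lemma
  have roleConf : ∀ (i : ZMod m) (u : U) (p q : U × ZMod m) (x y k : Fin 3),
      H.Adj (u, i) p → H.Adj (u, i) q → p.2 ≠ q.2 →
      col s((u, i), p) = x → col s((u, i), q) = y → x = k → y = k → False := by
    intro i u p q x y k h1 h2 hne c1 c2 e1 e2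
    exact distinctCol h1 h2 (fun hh => hne (congrArg Prod.snd hh)) (by rw [c1, c2, e1, e2])
  have parity : ∀ i : ZMod m, ∀ k : Fin 3,
      ((Finset.univ : Finset (Fin 5)).filter
        (fun r => ![A (i - α), B (i - α), A i, B i, D i] r = k)).card % 2 = 1 := by
    intro i
    set V : Finset U := Finset.univ.filter (fun u => u ≠ s ∧ u ≠ w ∧ u ≠ t) with hVdef
    have hsaV : sa ∈ V := by rw [hVdef]; simp [hsas, hsaw, hsat]
    have hsbV : sb ∈ V := by rw [hVdef]; simp [hsbs, hsbw, hsbt]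
    have htaV : ta ∈ V := by rw [hVdef]; simp [htas, htaw, htat]
    have htbV : tb ∈ V := by rw [hVdef]; simp [htbs, htbw, htbt]
    have hvCV : vC ∈ V := by rw [hVdef]; simp [hvCs, hvCw, hvCt]
    have hstep : ∀ k : Fin 3,
        ((Finset.univ : Finset (Fin 5)).filter
          (fun r => ![A (i - α), B (i - α), A i, B i, D i] r = k)).card % 2 = V.card % 2 := by
      intro k
      classical
      set intl : U → Prop := fun u => ∃ v, (v ≠ s ∧ v ≠ w ∧ v ≠ t) ∧ G.Adj u v ∧
        col s((u, i), (v, i)) = k with hintl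
      set bd : U → Prop := fun u =>
        (u = sa ∧ A (i - α) = k) ∨ (u = sb ∧ B (i - α) = k) ∨ (u = ta ∧ A i = k) ∨
        (u = tb ∧ B i = k) ∨ (u = vC ∧ D i = k) with hbd
      -- each internal vertex: internal k-edge iff no boundary k-edge
      have hiff : ∀ u ∈ V, (intl u ↔ ¬ bd u) := by
        intro u huV
        obtain ⟨hus, huw, hut⟩ : u ≠ s ∧ u ≠ w ∧ u ≠ t := by
          rw [hVdef] at huV; simpa using huV
        obtain ⟨x, hadjx, hcolx, huniq⟩ := one i u hus huw hut k
        constructor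
        · rintro ⟨v, ⟨hvs, hvw, hvt⟩, hGadj, hcolv⟩ hbdu
          have hvx : (v, i) = x := huniq (v, i) (hintAdj i u v hGadj hus hut hvs hvt) hcolv
          rw [hbd] at hbdu
          rcases hbdu with ⟨h1, hc⟩ | ⟨h1, hc⟩ | ⟨h1, hc⟩ | ⟨h1, hc⟩ | ⟨h1, hc⟩
          · have hadj' : H.Adj (u, i) (ta, i - α) := by rw [h1]; exact hadjA' i
            have hcol' : col s((u, i), (ta, i - α)) = k := by rw [h1, colA' i]; exact hc
            have h2 := (huniq _ hadj' hcol').trans hvx.symm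
            exact hL2 i (congrArg Prod.snd h2)
          · have hadj' : H.Adj (u, i) (tb, i - α) := by rw [h1]; exact hadjB' i
            have hcol' : col s((u, i), (tb, i - α)) = k := by rw [h1, colB' i]; exact hc
            have h2 := (huniq _ hadj' hcol').trans hvx.symm
            exact hL2 i (congrArg Prod.snd h2)
          · have hadj' : H.Adj (u, i) (sa, i + α) := by rw [h1]; exact hadjA i
            have hcol' : col s((u, i), (sa, i + α)) = k := by rw [h1]; exact hc
            have h2 := (huniq _ hadj' hcol').trans hvx.symm
            exact hL3 i (congrArg Prod.snd h2)
          · have hadj' : H.Adj (u, i) (sb, i + α) := by rw [h1]; exact hadjB i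
            have hcol' : col s((u, i), (sb, i + α)) = k := by rw [h1]; exact hc
            have h2 := (huniq _ hadj' hcol').trans hvx.symm
            exact hL3 i (congrArg Prod.snd h2)
          · have hadj' : H.Adj (u, i) (w, i) := by rw [h1]; exact hadjD i
            have hcol' : col s((u, i), (w, i)) = k := by rw [h1]; exact hc
            have h2 := (huniq _ hadj' hcol').trans hvx.symm
            exact hvw (congrArg Prod.fst h2).symm
        · intro hnbd
          obtain ⟨v, j⟩ := x
          by_cases hji : j = i
          · subst hji
            obtain ⟨hGuv, -, -, hvs, hvt⟩ := (hint j u v).mp hadjx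
            by_cases hvw : v = w
            · subst hvw
              exfalso
              rcases hNw u hGuv.symm with h | h | h
              · exact hus h
              · exact hut h
              · apply hnbd
                rw [hbd]
                right; right; right; right
                refine ⟨h, ?_⟩
                have hDeq : D j = col s((u, j), (v, j)) := by rw [h]
                rw [hDeq]; exact hcolx
            · rw [hintl]
              exact ⟨v, ⟨hvs, hvw, hvt⟩, hGuv, hcolx⟩
          · exfalso
            have hcr := ((hcross i j (fun hh => hji hh.symm) u v).mp hadjx)
            rcases hcr with ⟨hj, hcases⟩ | ⟨hj, hcases⟩ | ⟨huw', -, -⟩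
            · apply hnbd
              rw [hbd]
              rcases hcases with ⟨hu, hv⟩ | ⟨hu, hv⟩
              · right; right; left
                refine ⟨hu, ?_⟩
                have : A i = col s((u, i), (v, j)) := by rw [hu, hv, hj]
                rw [this]; exact hcolx
              · right; right; right; left
                refine ⟨hu, ?_⟩
                have : B i = col s((u, i), (v, j)) := by rw [hu, hv, hj]
                rw [this]; exact hcolx
            · apply hnbd
              rw [hbd]
              have hjval : j = i - α := by rw [hj]; ring
              rcases hcases with ⟨hv, hu⟩ | ⟨hv, hu⟩
              · left
                refine ⟨hu, ?_⟩
                have : A (i - α) = col s((u, i), (v, j)) := by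
                  rw [hu, hv, hjval]; exact (colA' i).symm
                rw [this]; exact hcolx
              · right; left
                refine ⟨hu, ?_⟩
                have : B (i - α) = col s((u, i), (v, j)) := by
                  rw [hu, hv, hjval]; exact (colB' i).symm
                rw [this]; exact hcolx
            · exact huw huw'
      -- partition
      have hfe : V.filter intl = V.filter (fun u => ¬ bd u) :=
        Finset.filter_congr (fun u hu => hiff u hu)
      have hpart : (V.filter bd).card + (V.filter (fun u => ¬ bd u)).card = V.card :=
        Finset.card_filter_add_card_filter_not (p := bd)
      -- evenness of the internal part
      have heven : Even (V.filter intl).card := by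
        set P : Finset (U × U) := (V ×ˢ V).filter
          (fun p => G.Adj p.1 p.2 ∧ col s((p.1, i), (p.2, i)) = k) with hP
        have hPeven : Even P.card := by
          apply even_card_of_invol P (fun p => (p.2, p.1))
          · intro p hp
            rw [hP, Finset.mem_filter, Finset.mem_product] at hp ⊢
            exact ⟨⟨hp.1.2, hp.1.1⟩, hp.2.1.symm, by rw [Sym2.eq_swap]; exact hp.2.2⟩
          · intro p hp; rfl
          · intro p hp h
            have h1 : p.2 = p.1 := congrArg Prod.fst h
            rw [hP, Finset.mem_filter] at hp
            exact G.loopless.irrefl p.1 (h1 ▸ hp.2.1)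
        have hmemV : ∀ u ∈ V, u ≠ s ∧ u ≠ w ∧ u ≠ t := by
          intro u hu; rw [hVdef] at hu; simpa using hu
        have hcardeq : P.card = (V.filter intl).card := by
          apply Finset.card_bij (fun p _ => p.1)
          · intro p hp
            rw [hP, Finset.mem_filter, Finset.mem_product] at hp
            rw [Finset.mem_filter]
            refine ⟨hp.1.1, ?_⟩
            rw [hintl]
            exact ⟨p.2, hmemV p.2 hp.1.2, hp.2.1, hp.2.2⟩
          · intro p hp q hq hpq
            rw [hP, Finset.mem_filter, Finset.mem_product] at hp hq
            obtain ⟨h1s, h1w, h1t⟩ := hmemV p.1 hp.1.1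
            obtain ⟨h2s, h2w, h2t⟩ := hmemV p.2 hp.1.2
            obtain ⟨h2s', h2w', h2t'⟩ := hmemV q.2 hq.1.2
            obtain ⟨x, hadjx, hcolx, huniq⟩ := one i p.1 h1s h1w h1t k
            have e1 : (p.2, i) = x :=
              huniq _ (hintAdj i p.1 p.2 hp.2.1 h1s h1t h2s h2t) hp.2.2
            have e2 : (q.2, i) = x := by
              refine huniq _ ?_ ?_
              · rw [hpq]; exact hintAdj i q.1 q.2 hq.2.1 (hpq ▸ h1s) (hpq ▸ h1t) h2s' h2t'
              · rw [hpq]; exact hq.2.2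
            have : p.2 = q.2 := congrArg Prod.fst (e1.trans e2.symm)
            exact Prod.ext hpq this
          · intro u hu
            rw [Finset.mem_filter] at hu
            have hintlu := hu.2
            rw [hintl] at hintlu
            obtain ⟨v, ⟨hvs, hvw, hvt⟩, hGadj, hcolv⟩ := hintlu
            refine ⟨(u, v), ?_, rfl⟩
            rw [hP, Finset.mem_filter, Finset.mem_product]
            exact ⟨⟨hu.1, by rw [hVdef]; simp [hvs, hvw, hvt]⟩, hGadj, hcolv⟩
        rw [← hcardeq]; exact hPeven
      -- the boundary part counts the five semiedge colors
      have hbij : ((Finset.univ : Finset (Fin 5)).filter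
          (fun r => ![A (i - α), B (i - α), A i, B i, D i] r = k)).card
          = (V.filter bd).card := by
        apply Finset.card_bij (fun r _ => ![sa, sb, ta, tb, vC] r)
        · intro r hr
          rw [Finset.mem_filter] at hr ⊢
          fin_cases r <;> simp only [Matrix.cons_val_zero, Matrix.cons_val_one,
            Matrix.head_cons, Matrix.cons_val_two, Matrix.tail_cons, Matrix.cons_val_three,
            Matrix.cons_val_four, Matrix.cons_val_fin_one] at hr ⊢
          · exact ⟨hsaV, by rw [hbd]; exact Or.inl ⟨rfl, hr.2⟩⟩
          · exact ⟨hsbV, by rw [hbd]; exact Or.inr (Or.inl ⟨rfl, hr.2⟩)⟩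
          · exact ⟨htaV, by rw [hbd]; exact Or.inr (Or.inr (Or.inl ⟨rfl, hr.2⟩))⟩
          · exact ⟨htbV, by rw [hbd]; exact Or.inr (Or.inr (Or.inr (Or.inl ⟨rfl, hr.2⟩)))⟩
          · exact ⟨hvCV, by rw [hbd]; exact Or.inr (Or.inr (Or.inr (Or.inr ⟨rfl, hr.2⟩)))⟩
        · intro r hr r' hr' heq
          rw [Finset.mem_filter] at hr hr'
          fin_cases r <;> fin_cases r' <;> (try rfl) <;> exfalso
          -- (0,1)
          · replace heq : sa = sb := by simpa using heq
            exact hsab heq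
          -- (0,2) sa = ta
          · replace heq : sa = ta := by simpa using heq
            replace hr : A (i - α) = k := by simpa using hr.2
            replace hr' : A i = k := by simpa using hr'.2
            exact roleConf i sa (ta, i - α) (sa, i + α) (A (i - α)) (A i) k (hadjA' i)
              (heq.symm ▸ hadjA i) (hL1 i) (colA' i)
              (by nth_rewrite 1 [heq]; rfl) hr hr'
          -- (0,3) sa = tb
          · replace heq : sa = tb := by simpa using heq
            replace hr : A (i - α) = k := by simpa using hr.2
            replace hr' : B i = k := by simpa using hr'.2
            exact roleConf i sa (ta, i - α) (sb, i + α) (A (i - α)) (B i) k (hadjA' i)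
              (heq.symm ▸ hadjB i) (hL1 i) (colA' i)
              (heq.symm ▸ (rfl : col s((tb, i), (sb, i + α)) = B i)) hr hr'
          -- (0,4) sa = vC
          · replace heq : sa = vC := by simpa using heq
            replace hr : A (i - α) = k := by simpa using hr.2
            replace hr' : D i = k := by simpa using hr'.2
            exact roleConf i sa (ta, i - α) (w, i) (A (i - α)) (D i) k (hadjA' i)
              (heq.symm ▸ hadjD i) (hL2 i) (colA' i)
              (heq.symm ▸ (rfl : col s((vC, i), (w, i)) = D i)) hr hr'
          -- (1,0)
          · replace heq : sb = sa := by simpa using heq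
            exact hsab heq.symm
          -- (1,2) sb = ta
          · replace heq : sb = ta := by simpa using heq
            replace hr : B (i - α) = k := by simpa using hr.2
            replace hr' : A i = k := by simpa using hr'.2
            exact roleConf i sb (tb, i - α) (sa, i + α) (B (i - α)) (A i) k (hadjB' i)
              (heq.symm ▸ hadjA i) (hL1 i) (colB' i)
              (heq.symm ▸ (rfl : col s((ta, i), (sa, i + α)) = A i)) hr hr'
          -- (1,3) sb = tb
          · replace heq : sb = tb := by simpa using heq
            replace hr : B (i - α) = k := by simpa using hr.2
            replace hr' : B i = k := by simpa using hr'.2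
            exact roleConf i sb (tb, i - α) (sb, i + α) (B (i - α)) (B i) k (hadjB' i)
              (heq.symm ▸ hadjB i) (hL1 i) (colB' i)
              (by nth_rewrite 1 [heq]; rfl) hr hr'
          -- (1,4) sb = vC
          · replace heq : sb = vC := by simpa using heq
            replace hr : B (i - α) = k := by simpa using hr.2
            replace hr' : D i = k := by simpa using hr'.2
            exact roleConf i sb (tb, i - α) (w, i) (B (i - α)) (D i) k (hadjB' i)
              (heq.symm ▸ hadjD i) (hL2 i) (colB' i)
              (heq.symm ▸ (rfl : col s((vC, i), (w, i)) = D i)) hr hr'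
          -- (2,0) ta = sa
          · replace heq : ta = sa := by simpa using heq
            replace hr : A i = k := by simpa using hr.2
            replace hr' : A (i - α) = k := by simpa using hr'.2
            exact roleConf i ta (sa, i + α) (ta, i - α) (A i) (A (i - α)) k (hadjA i)
              (heq.symm ▸ hadjA' i) (fun hh => hL1 i hh.symm) rfl
              (heq.symm ▸ colA' i) hr hr'
          -- (2,1) ta = sb
          · replace heq : ta = sb := by simpa using heq
            replace hr : A i = k := by simpa using hr.2
            replace hr' : B (i - α) = k := by simpa using hr'.2
            exact roleConf i ta (sa, i + α) (tb, i - α) (A i) (B (i - α)) k (hadjA i)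
              (heq.symm ▸ hadjB' i) (fun hh => hL1 i hh.symm) rfl
              (heq.symm ▸ colB' i) hr hr'
          -- (2,3)
          · replace heq : ta = tb := by simpa using heq
            exact htab heq
          -- (2,4) ta = vC
          · replace heq : ta = vC := by simpa using heq
            replace hr : A i = k := by simpa using hr.2
            replace hr' : D i = k := by simpa using hr'.2
            exact roleConf i ta (sa, i + α) (w, i) (A i) (D i) k (hadjA i)
              (heq.symm ▸ hadjD i) (hL3 i) rfl
              (heq.symm ▸ (rfl : col s((vC, i), (w, i)) = D i)) hr hr'
          -- (3,0) tb = sa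
          · replace heq : tb = sa := by simpa using heq
            replace hr : B i = k := by simpa using hr.2
            replace hr' : A (i - α) = k := by simpa using hr'.2
            exact roleConf i tb (sb, i + α) (ta, i - α) (B i) (A (i - α)) k (hadjB i)
              (heq.symm ▸ hadjA' i) (fun hh => hL1 i hh.symm) rfl
              (heq.symm ▸ colA' i) hr hr'
          -- (3,1) tb = sb
          · replace heq : tb = sb := by simpa using heq
            replace hr : B i = k := by simpa using hr.2
            replace hr' : B (i - α) = k := by simpa using hr'.2
            exact roleConf i tb (sb, i + α) (tb, i - α) (B i) (B (i - α)) k (hadjB i)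
              (heq.symm ▸ hadjB' i) (fun hh => hL1 i hh.symm) rfl
              (heq.symm ▸ colB' i) hr hr'
          -- (3,2)
          · replace heq : tb = ta := by simpa using heq
            exact htab heq.symm
          -- (3,4) tb = vC
          · replace heq : tb = vC := by simpa using heq
            replace hr : B i = k := by simpa using hr.2
            replace hr' : D i = k := by simpa using hr'.2
            exact roleConf i tb (sb, i + α) (w, i) (B i) (D i) k (hadjB i)
              (heq.symm ▸ hadjD i) (hL3 i) rfl
              (heq.symm ▸ (rfl : col s((vC, i), (w, i)) = D i)) hr hr'
          -- (4,0) vC = sa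
          · replace heq : vC = sa := by simpa using heq
            replace hr : D i = k := by simpa using hr.2
            replace hr' : A (i - α) = k := by simpa using hr'.2
            exact roleConf i vC (w, i) (ta, i - α) (D i) (A (i - α)) k (hadjD i)
              (heq.symm ▸ hadjA' i) (fun hh => hL2 i hh.symm) rfl
              (heq.symm ▸ colA' i) hr hr'
          -- (4,1) vC = sb
          · replace heq : vC = sb := by simpa using heq
            replace hr : D i = k := by simpa using hr.2
            replace hr' : B (i - α) = k := by simpa using hr'.2
            exact roleConf i vC (w, i) (tb, i - α) (D i) (B (i - α)) k (hadjD i)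
              (heq.symm ▸ hadjB' i) (fun hh => hL2 i hh.symm) rfl
              (heq.symm ▸ colB' i) hr hr'
          -- (4,2) vC = ta
          · replace heq : vC = ta := by simpa using heq
            replace hr : D i = k := by simpa using hr.2
            replace hr' : A i = k := by simpa using hr'.2
            exact roleConf i vC (w, i) (sa, i + α) (D i) (A i) k (hadjD i)
              (heq.symm ▸ hadjA i) (fun hh => hL3 i hh.symm) rfl
              (heq.symm ▸ (rfl : col s((ta, i), (sa, i + α)) = A i)) hr hr'
          -- (4,3) vC = tb
          · replace heq : vC = tb := by simpa using heq
            replace hr : D i = k := by simpa using hr.2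
            replace hr' : B i = k := by simpa using hr'.2
            exact roleConf i vC (w, i) (sb, i + α) (D i) (B i) k (hadjD i)
              (heq.symm ▸ hadjB i) (fun hh => hL3 i hh.symm) rfl
              (heq.symm ▸ (rfl : col s((tb, i), (sb, i + α)) = B i)) hr hr'
        · intro u hu
          rw [Finset.mem_filter] at hu
          have hbdu := hu.2
          rw [hbd] at hbdu
          rcases hbdu with ⟨h1, hc⟩ | ⟨h1, hc⟩ | ⟨h1, hc⟩ | ⟨h1, hc⟩ | ⟨h1, hc⟩
          · exact ⟨0, by simp [hc], by simp [h1]⟩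
          · exact ⟨1, by simp [hc], by simp [h1]⟩
          · exact ⟨2, by simp [hc], by simp [h1]⟩
          · exact ⟨3, by simp [hc], by simp [h1]⟩
          · exact ⟨4, by simp [hc], by simp [h1]⟩
      rw [hbij]
      rw [hfe] at heven
      obtain ⟨e2, he2⟩ := heven
      omega
    -- sum over the three colors is five
    have hsum : ((Finset.univ : Finset (Fin 5)).filter
          (fun r => ![A (i - α), B (i - α), A i, B i, D i] r = (0 : Fin 3))).card +
        ((Finset.univ : Finset (Fin 5)).filter
          (fun r => ![A (i - α), B (i - α), A i, B i, D i] r = (1 : Fin 3))).card +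
        ((Finset.univ : Finset (Fin 5)).filter
          (fun r => ![A (i - α), B (i - α), A i, B i, D i] r = (2 : Fin 3))).card = 5 := by
      have h5 := Finset.sum_card_fiberwise_eq_card_filter (Finset.univ : Finset (Fin 5))
        (Finset.univ : Finset (Fin 3)) (fun r => ![A (i - α), B (i - α), A i, B i, D i] r)
      rw [Fin.sum_univ_three] at h5
      simpa using h5
    have h0 := hstep 0
    have h1 := hstep 1
    have h2 := hstep 2
    intro k
    have hk := hstep k
    omega
  -- the snark-failure lemma per cluster
  have snarkCl : ∀ i : ZMod m, ¬ (A (i - α) ≠ B (i - α) ∧ A i ≠ B i ∧ ∃ x y : Fin 3,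
      x ≠ y ∧ x ≠ A (i - α) ∧ x ≠ B (i - α) ∧ x ≠ D i ∧ y ≠ A i ∧ y ≠ B i ∧ y ≠ D i) := by
    rintro i ⟨hAB, hAB', x, y, hxy, hxA, hxB, hxD, hyA, hyB, hyD⟩
    apply hsnark
    have hsymm : ∀ u v : U, col s((u, i), (v, i)) = col s((v, i), (u, i)) := by
      intro u v; rw [Sym2.eq_swap]
    set base : Sym2 U → Fin 3 :=
      Sym2.lift ⟨fun u v => col s((u, i), (v, i)), hsymm⟩ with hbase
    set col' : Sym2 U → Fin 3 := fun e =>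
      if e = s(s, sa) then A (i - α) else
      if e = s(s, sb) then B (i - α) else
      if e = s(s, w) then x else
      if e = s(t, ta) then A i else
      if e = s(t, tb) then B i else
      if e = s(t, w) then y else
      if e = s(w, vC) then D i else base e with hcol'
    have ne2 : ∀ {a1 b1 c1 d1 : U}, ¬(a1 = c1 ∧ b1 = d1) → ¬(a1 = d1 ∧ b1 = c1) →
        s(a1, b1) ≠ s(c1, d1) := by
      intro a1 b1 c1 d1 h1 h2 h
      rcases Sym2.eq_iff.mp h with h' | h'
      exacts [h1 h', h2 h']
    have ev1 : col' s(s, sa) = A (i - α) := if_pos rfl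
    have ev2 : col' s(s, sb) = B (i - α) :=
      (if_neg (ne2 (fun h => hsab h.2.symm) (fun h => hsas h.1.symm))).trans (if_pos rfl)
    have ev3 : col' s(s, w) = x :=
      (if_neg (ne2 (fun h => hsaw h.2.symm) (fun h => hsas h.1.symm))).trans
      ((if_neg (ne2 (fun h => hsbw h.2.symm) (fun h => hsbs h.1.symm))).trans (if_pos rfl))
    have ev4 : col' s(t, ta) = A i :=
      (if_neg (ne2 (fun h => hst h.1.symm) (fun h => hsat h.1.symm))).trans
      ((if_neg (ne2 (fun h => hst h.1.symm) (fun h => hsbt h.1.symm))).trans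
      ((if_neg (ne2 (fun h => hst h.1.symm) (fun h => hwtne h.1.symm))).trans (if_pos rfl)))
    have ev5 : col' s(t, tb) = B i :=
      (if_neg (ne2 (fun h => hst h.1.symm) (fun h => hsat h.1.symm))).trans
      ((if_neg (ne2 (fun h => hst h.1.symm) (fun h => hsbt h.1.symm))).trans
      ((if_neg (ne2 (fun h => hst h.1.symm) (fun h => hwtne h.1.symm))).trans
      ((if_neg (ne2 (fun h => htab h.2.symm) (fun h => htat h.1.symm))).trans (if_pos rfl))))
    have ev6 : col' s(t, w) = y :=
      (if_neg (ne2 (fun h => hst h.1.symm) (fun h => hsat h.1.symm))).trans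
      ((if_neg (ne2 (fun h => hst h.1.symm) (fun h => hsbt h.1.symm))).trans
      ((if_neg (ne2 (fun h => hst h.1.symm) (fun h => hwtne h.1.symm))).trans
      ((if_neg (ne2 (fun h => htaw h.2.symm) (fun h => htat h.1.symm))).trans
      ((if_neg (ne2 (fun h => htbw h.2.symm) (fun h => htbt h.1.symm))).trans (if_pos rfl)))))
    have ev7 : col' s(w, vC) = D i :=
      (if_neg (ne2 (fun h => hswne h.1.symm) (fun h => hsaw h.1.symm))).trans
      ((if_neg (ne2 (fun h => hswne h.1.symm) (fun h => hsbw h.1.symm))).trans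
      ((if_neg (ne2 (fun h => hswne h.1.symm) (fun h => hvCs h.2))).trans
      ((if_neg (ne2 (fun h => hwtne h.1) (fun h => htaw h.1.symm))).trans
      ((if_neg (ne2 (fun h => hwtne h.1) (fun h => htbw h.1.symm))).trans
      ((if_neg (ne2 (fun h => hwtne h.1) (fun h => hvCt h.2))).trans (if_pos rfl))))))
    have ev8 : ∀ u v : U, u ≠ s → u ≠ t → u ≠ w → v ≠ s → v ≠ t → v ≠ w →
        col' s(u, v) = col s((u, i), (v, i)) := by
      intro u v hus hut huw hvs hvt hvw
      exact (if_neg (ne2 (fun h => hus h.1) (fun h => hvs h.2))).trans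
        ((if_neg (ne2 (fun h => hus h.1) (fun h => hvs h.2))).trans
        ((if_neg (ne2 (fun h => hus h.1) (fun h => huw h.1))).trans
        ((if_neg (ne2 (fun h => hut h.1) (fun h => hvt h.2))).trans
        ((if_neg (ne2 (fun h => hut h.1) (fun h => hvt h.2))).trans
        ((if_neg (ne2 (fun h => hut h.1) (fun h => huw h.1))).trans
        ((if_neg (ne2 (fun h => huw h.1) (fun h => hvw h.2))).trans rfl))))))
    -- classification of edge values at internal vertices
    have side : ∀ v0 v' : U, v0 ≠ s → v0 ≠ w → v0 ≠ t → G.Adj v0 v' →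
        ∃ p : U × ZMod m, H.Adj (v0, i) p ∧ col' s(v0, v') = col s((v0, i), p) ∧
          ((v' = s ∧ p.2 = i - α) ∨ (v' = t ∧ p.2 = i + α) ∨ (v' = w ∧ p = (w, i)) ∨
           (v' ≠ s ∧ v' ≠ t ∧ v' ≠ w ∧ p = (v', i))) := by
      intro v0 v' h0s h0w h0t hadj
      by_cases hv's : v' = s
      · rcases hNs v0 (by rw [← hv's]; exact hadj.symm) with h | h | h
        · refine ⟨(ta, i - α), by rw [h]; exact hadjA' i, ?_, Or.inl ⟨hv's, rfl⟩⟩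
          rw [hv's, h]
          have h1 := ev1
          rw [Sym2.eq_swap] at h1
          rw [h1]
          exact (colA' i).symm
        · refine ⟨(tb, i - α), by rw [h]; exact hadjB' i, ?_, Or.inl ⟨hv's, rfl⟩⟩
          rw [hv's, h]
          have h1 := ev2
          rw [Sym2.eq_swap] at h1
          rw [h1]
          exact (colB' i).symm
        · exact absurd h h0w
      · by_cases hv't : v' = t
        · rcases hNt v0 (by rw [← hv't]; exact hadj.symm) with h | h | h
          · refine ⟨(sa, i + α), by rw [h]; exact hadjA i, ?_, Or.inr (Or.inl ⟨hv't, rfl⟩)⟩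
            rw [hv't, h]
            have h1 := ev4
            rw [Sym2.eq_swap] at h1
            rw [h1]
          · refine ⟨(sb, i + α), by rw [h]; exact hadjB i, ?_, Or.inr (Or.inl ⟨hv't, rfl⟩)⟩
            rw [hv't, h]
            have h1 := ev5
            rw [Sym2.eq_swap] at h1
            rw [h1]
          · exact absurd h h0w
        · by_cases hv'w : v' = w
          · rcases hNw v0 (by rw [← hv'w]; exact hadj.symm) with h | h | h
            · exact absurd h h0s
            · exact absurd h h0t
            · refine ⟨(w, i), by rw [h]; exact hadjD i, ?_,
                Or.inr (Or.inr (Or.inl ⟨hv'w, rfl⟩))⟩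
              rw [hv'w, h]
              have h1 := ev7
              rw [Sym2.eq_swap] at h1
              rw [h1]
          · exact ⟨(v', i), hintAdj i v0 v' hadj h0s h0t hv's hv't,
              ev8 v0 v' h0s h0t h0w hv's hv't hv'w,
              Or.inr (Or.inr (Or.inr ⟨hv's, hv't, hv'w, rfl⟩))⟩
    refine ⟨col', ?_⟩
    intro e1 he1 e2 he2 hne hshare
    obtain ⟨v, -, hv1, hv2⟩ := hshare
    obtain ⟨v1, rfl⟩ := Sym2.mem_iff_exists.mp hv1
    obtain ⟨v2, rfl⟩ := Sym2.mem_iff_exists.mp hv2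
    rw [SimpleGraph.mem_edgeSet] at he1 he2
    have hv12 : v1 ≠ v2 := by rintro rfl; exact hne rfl
    by_cases hvs : v = s
    · rw [hvs] at he1 he2 ⊢
      rcases hNs v1 he1 with h1 | h1 | h1 <;> rcases hNs v2 he2 with h2 | h2 | h2 <;>
        (try (exact absurd (h1.trans h2.symm) hv12)) <;> rw [h1, h2]
      · rw [ev1, ev2]; exact hAB
      · rw [ev1, ev3]; exact hxA.symm
      · rw [ev2, ev1]; exact hAB.symm
      · rw [ev2, ev3]; exact hxB.symm
      · rw [ev3, ev1]; exact hxA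
      · rw [ev3, ev2]; exact hxB
    · by_cases hvt : v = t
      · rw [hvt] at he1 he2 ⊢
        rcases hNt v1 he1 with h1 | h1 | h1 <;> rcases hNt v2 he2 with h2 | h2 | h2 <;>
          (try (exact absurd (h1.trans h2.symm) hv12)) <;> rw [h1, h2]
        · rw [ev4, ev5]; exact hAB'
        · rw [ev4, ev6]; exact hyA.symm
        · rw [ev5, ev4]; exact hAB'.symm
        · rw [ev5, ev6]; exact hyB.symm
        · rw [ev6, ev4]; exact hyA
        · rw [ev6, ev5]; exact hyB
      · by_cases hvw : v = w
        · rw [hvw] at he1 he2 ⊢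
          have ev3' : col' s(w, s) = x := by have h := ev3; rwa [Sym2.eq_swap] at h
          have ev6' : col' s(w, t) = y := by have h := ev6; rwa [Sym2.eq_swap] at h
          rcases hNw v1 he1 with h1 | h1 | h1 <;> rcases hNw v2 he2 with h2 | h2 | h2 <;>
            (try (exact absurd (h1.trans h2.symm) hv12)) <;> rw [h1, h2]
          · rw [ev3', ev6']; exact hxy
          · rw [ev3', ev7]; exact hxD
          · rw [ev6', ev3']; exact hxy.symm
          · rw [ev6', ev7]; exact hyD
          · rw [ev7, ev3']; exact hxD.symm
          · rw [ev7, ev6']; exact hyD.symm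
        · obtain ⟨p1, hp1adj, hp1col, hp1tag⟩ := side v v1 hvs hvw hvt he1
          obtain ⟨p2, hp2adj, hp2col, hp2tag⟩ := side v v2 hvs hvw hvt he2
          rw [hp1col, hp2col]
          apply distinctCol hp1adj hp2adj
          rcases hp1tag with ⟨e1', hl⟩ | ⟨e1', hl⟩ | ⟨e1', hp⟩ | ⟨e1s, e1t, e1w, hp⟩ <;>
            rcases hp2tag with ⟨e2', hl2⟩ | ⟨e2', hl2⟩ | ⟨e2', hp2'⟩ | ⟨e2s, e2t, e2w, hp2'⟩ <;>
            intro h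
          · exact hv12 (e1'.trans e2'.symm)
          · have hsnd := congrArg Prod.snd h
            rw [hl, hl2] at hsnd
            exact hL1 i hsnd
          · have hsnd := congrArg Prod.snd h
            rw [hl, hp2'] at hsnd
            exact hL2 i hsnd
          · have hsnd := congrArg Prod.snd h
            rw [hl, hp2'] at hsnd
            exact hL2 i hsnd
          · have hsnd := congrArg Prod.snd h
            rw [hl, hl2] at hsnd
            exact hL1 i hsnd.symm
          · exact hv12 (e1'.trans e2'.symm)
          · have hsnd := congrArg Prod.snd h
            rw [hl, hp2'] at hsnd
            exact hL3 i hsnd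
          · have hsnd := congrArg Prod.snd h
            rw [hl, hp2'] at hsnd
            exact hL3 i hsnd
          · have hsnd := congrArg Prod.snd h
            rw [hp, hl2] at hsnd
            exact hL2 i hsnd.symm
          · have hsnd := congrArg Prod.snd h
            rw [hp, hl2] at hsnd
            exact hL3 i hsnd.symm
          · exact hv12 (e1'.trans e2'.symm)
          · have hfst := congrArg Prod.fst h
            rw [hp, hp2'] at hfst
            exact e2w hfst.symm
          · have hsnd := congrArg Prod.snd h
            rw [hp, hl2] at hsnd
            exact hL2 i hsnd.symm
          · have hsnd := congrArg Prod.snd h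
            rw [hp, hl2] at hsnd
            exact hL3 i hsnd.symm
          · have hfst := congrArg Prod.fst h
            rw [hp, hp2'] at hfst
            exact e1w hfst
          · have hfst := congrArg Prod.fst h
            rw [hp, hp2'] at hfst
            exact hv12 hfst
  -- combine: alternation of the "A = B" predicate
  have flip : ∀ i : ZMod m, (A (i - α) = B (i - α)) ↔ ¬ (A i = B i) := fun i =>
    colorLogic (A (i - α)) (B (i - α)) (A i) (B i) (D i) (parity i) (snarkCl i)
  have flip' : ∀ i : ZMod m, (A i = B i) ↔ ¬ (A (i + α) = B (i + α)) := by
    intro i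
    have h := flip (i + α)
    rwa [add_sub_cancel_right] at h
  -- iterate the alternation
  have iter : ∀ (n : ℕ) (i : ZMod m),
      (A (i + n • α) = B (i + n • α)) ↔ (if Even n then A i = B i else ¬ (A i = B i)) := by
    intro n
    induction n with
    | zero => intro i; simp
    | succ n ih =>
      intro i
      have h1 : i + (n + 1) • α = (i + α) + n • α := by
        rw [succ_nsmul]; ring
      rw [h1]
      rw [ih (i + α)]
      by_cases he : Even n
      · have hne : ¬ Even (n + 1) := by simp [Nat.even_add_one, he]
        simp only [he, if_true, hne, if_false]
        rw [flip' i]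
        exact not_not.symm
      · have hne : Even (n + 1) := by simp [Nat.even_add_one, he]
        simp only [he, if_false, hne, if_true]
        rw [flip' i]
  -- the order of α is odd
  set n : ℕ := m / Nat.gcd a m with hndef
  have hna : (n : ℕ) • α = 0 := by
    have hg2 : Nat.gcd a m ∣ m := Nat.gcd_dvd_right a m
    obtain ⟨a', ha'⟩ := Nat.gcd_dvd_left a m
    have hkey : n * a = m * a' := by
      have h2 : m / Nat.gcd a m * Nat.gcd a m = m := Nat.div_mul_cancel hg2
      calc n * a = m / Nat.gcd a m * a := by rw [hndef]
        _ = m / Nat.gcd a m * (Nat.gcd a m * a') := by rw [← ha']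
        _ = (m / Nat.gcd a m * Nat.gcd a m) * a' := by ring
        _ = m * a' := by rw [h2]
    rw [hαdef, nsmul_eq_mul, ← Nat.cast_mul]
    exact (ZMod.natCast_eq_zero_iff _ _).mpr ⟨a', hkey⟩
  have hfinal := iter n 0
  rw [hna, add_zero] at hfinal
  rw [if_neg (Nat.not_even_iff_odd.mpr hodd)] at hfinal
  exact (iff_not_self hfinal)
end

section
/- Let m be even and c a positive integer with m/gcd(m,c) even. Then the graph G_α(m; 1, 1, c) is properly 3-edge-colorable, where G is the specific 5-pole of Theorem 5.1 (equivalently, any 5-pole admitting color patterns in which the input pair can be monochromatic). -/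
private lemma phi_step (m c : ℕ) (hc : 0 < c) (hcm : c < m)
    (hmc : Even (m / Nat.gcd m c)) (a : ℕ) :
    ((a + c) % m) / (Nat.gcd m c) % 2 ≠ a / (Nat.gcd m c) % 2 := by
  have hm0 : 0 < m := lt_trans hc hcm
  set g := Nat.gcd m c with hg
  have hg0 : 0 < g := Nat.gcd_pos_of_pos_left c hm0
  obtain ⟨m', hm'⟩ := Nat.gcd_dvd_left m c
  obtain ⟨c', hc'⟩ := Nat.gcd_dvd_right m c
  rw [← hg] at hm' hc'
  have hm'0 : 0 < m' := by
    rcases Nat.eq_zero_or_pos m' with h | h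
    · subst h; simp at hm'; omega
    · exact h
  have hm'div : m / g = m' := by rw [hm', Nat.mul_div_cancel_left _ hg0]
  have hc'div : c / g = c' := by rw [hc', Nat.mul_div_cancel_left _ hg0]
  have hm'even : 2 ∣ m' := by
    rw [hm'div] at hmc; obtain ⟨k, hk⟩ := hmc; exact ⟨k, by omega⟩
  have hcop : Nat.Coprime m' c' := by
    have h := Nat.coprime_div_gcd_div_gcd (m := m) (n := c) hg0
    rwa [← hg, hm'div, hc'div] at h
  have hc'odd : c' % 2 = 1 := by
    rcases Nat.even_or_odd c' with he | ho
    · exfalso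
      have h2 : (2 : ℕ) ∣ Nat.gcd m' c' :=
        Nat.dvd_gcd hm'even (by obtain ⟨k, hk⟩ := he; exact ⟨k, by omega⟩)
      rw [Nat.Coprime] at hcop
      omega
    · obtain ⟨k, hk⟩ := ho; omega
  set q := a / g with hq
  set r := a % g with hr
  have har : a = g * q + r := (Nat.div_add_mod a g).symm
  have hrg : r < g := Nat.mod_lt a hg0
  have hmodlt : (q + c') % m' < m' := Nat.mod_lt _ hm'0
  have hmod : (a + c) % m = g * ((q + c') % m') + r := by
    conv_lhs => rw [hm', hc', har, show g * q + r + g * c' = g * (q + c') + r by ring]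
    rw [Nat.add_mod, Nat.mul_mod_mul_left,
      Nat.mod_eq_of_lt (show r < g * m' by nlinarith),
      Nat.mod_eq_of_lt (show g * ((q + c') % m') + r < g * m' by nlinarith)]
  rw [hmod, Nat.mul_add_div hg0, Nat.div_eq_of_lt hrg, Nat.add_zero,
    Nat.mod_mod_of_dvd _ hm'even]
  omega


/-- If `m` is even and `m / gcd(m,c)` is even, then `G_α(m; 1, 1, c)` is
properly 3-edge-colorable, where `G` is any 5-pole (obtained from a cubic graph
by deleting the path `s — w — t`) admitting the color patterns in which the
input pair is monochromatic: the `TwoLeft` pattern `[(x,x),(y,z)]` and the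
`TwoRight` pattern `[(y,z),(x,x)]`, both with spoke colored `x`. -/
theorem G_alpha_even_colorable {U : Type*} [Fintype U] [DecidableEq U]
    (G : SimpleGraph U) [DecidableRel G.Adj]
    (hcubic : ∀ v : U, G.degree v = 3)
    (s w t sa sb ta tb vC : U)
    (hsw : G.Adj s w) (hwt : G.Adj w t) (hst : s ≠ t)
    (hsa : G.Adj s sa) (hsb : G.Adj s sb) (hsab : sa ≠ sb)
    (hta : G.Adj t ta) (htb : G.Adj t tb) (htab : ta ≠ tb)
    (hvC : G.Adj w vC)
    (houter : ∀ u ∈ ({sa, sb, ta, tb, vC} : Set U), u ≠ s ∧ u ≠ w ∧ u ≠ t)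
    -- the TwoLeft pattern is admissible for the 5-pole
    (hTwoLeft : ∀ x y z : Fin 3, x ≠ y → x ≠ z → y ≠ z →
      ∃ c0 : Sym2 U → Fin 3,
        ProperOn (G.edgeSet \ {s(s, w), s(w, t)}) ({s, w, t} : Set U) c0 ∧
        c0 s(s, sa) = x ∧ c0 s(s, sb) = x ∧ c0 s(w, vC) = x ∧
        c0 s(t, ta) = y ∧ c0 s(t, tb) = z)
    -- the TwoRight pattern is admissible for the 5-pole
    (hTwoRight : ∀ x y z : Fin 3, x ≠ y → x ≠ z → y ≠ z →
      ∃ c0 : Sym2 U → Fin 3,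
        ProperOn (G.edgeSet \ {s(s, w), s(w, t)}) ({s, w, t} : Set U) c0 ∧
        c0 s(s, sa) = y ∧ c0 s(s, sb) = z ∧ c0 s(w, vC) = x ∧
        c0 s(t, ta) = x ∧ c0 s(t, tb) = x)
    (m c : ℕ) [NeZero m]
    (hm : Even m) (hmc : Even (m / Nat.gcd m c))
    (hc1 : 1 ≤ c) (hc2 : 2 * c < m)
    (H : SimpleGraph (U × ZMod m))
    (hint : ∀ (i : ZMod m) (u u' : U),
      H.Adj (u, i) (u', i) ↔ (G.Adj u u' ∧ u ≠ s ∧ u ≠ t ∧ u' ≠ s ∧ u' ≠ t))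
    (hcross : ∀ (i j : ZMod m), i ≠ j → ∀ u u' : U,
      H.Adj (u, i) (u', j) ↔
        ((j = i + 1 ∧ ((u = ta ∧ u' = sa) ∨ (u = tb ∧ u' = sb))) ∨
         (i = j + 1 ∧ ((u' = ta ∧ u = sa) ∨ (u' = tb ∧ u = sb))) ∨
         (u = w ∧ u' = w ∧ (j = i + (c : ZMod m) ∨ i = j + (c : ZMod m))))) :
    ∃ col : Sym2 (U × ZMod m) → Fin 3,
      ProperOn H.edgeSet (∅ : Set (U × ZMod m)) col := by
  classical
  obtain ⟨c0L, hLp, hL1, hL2, hL3, hL4, hL5⟩ :=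
    hTwoLeft 0 1 2 (by decide) (by decide) (by decide)
  obtain ⟨c0R, hRp, hR1, hR2, hR3, hR4, hR5⟩ :=
    hTwoRight 0 1 2 (by decide) (by decide) (by decide)
  have hm4 : 4 ≤ m := by obtain ⟨k, hk⟩ := hm; omega
  haveI : Fact (1 < m) := ⟨by omega⟩
  obtain ⟨hsa_s, hsa_w, hsa_t⟩ := houter sa (by simp)
  obtain ⟨hsb_s, hsb_w, hsb_t⟩ := houter sb (by simp)
  obtain ⟨hta_s, hta_w, hta_t⟩ := houter ta (by simp)
  obtain ⟨htb_s, htb_w, htb_t⟩ := houter tb (by simp)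
  obtain ⟨hvC_s, hvC_w, hvC_t⟩ := houter vC (by simp)
  have hts : t ≠ s := hst.symm
  have hws : w ≠ s := hsw.ne'
  have hwt' : w ≠ t := hwt.ne
  have hnat : ∀ k : ℕ, 0 < k → k < m → (k : ZMod m) ≠ 0 := by
    intro k hk1 hk2 h
    rw [ZMod.natCast_eq_zero_iff] at h
    exact absurd (Nat.le_of_dvd hk1 h) (by omega)
  have h1z : (1 : ZMod m) ≠ 0 := by
    have h := hnat 1 one_pos (by omega); rwa [Nat.cast_one] at h
  have h2z : (1 : ZMod m) + 1 ≠ 0 := by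
    have h := hnat 2 (by omega) (by omega)
    intro hx; apply h; push_cast; linear_combination hx
  have hcz : (c : ZMod m) ≠ 0 := hnat c (by omega) (by omega)
  have h2cz : (c : ZMod m) + c ≠ 0 := by
    have h := hnat (c + c) (by omega) (by omega)
    intro hx; apply h; push_cast; linear_combination hx
  have hvalc : ((c : ℕ) : ZMod m).val = c := by
    rw [ZMod.val_natCast, Nat.mod_eq_of_lt (by omega)]
  have hphi : ∀ i : ZMod m,
      (i + (c : ZMod m)).val / Nat.gcd m c % 2 ≠ i.val / Nat.gcd m c % 2 := by
    intro i
    rw [ZMod.val_add, hvalc]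
    exact phi_step m c (by omega) (by omega) hmc i.val
  have pflip : ∀ i : ZMod m, (i + 1).val % 2 ≠ i.val % 2 := by
    intro i
    rw [ZMod.val_add, ZMod.val_one]
    have hv : i.val < m := ZMod.val_lt i
    obtain ⟨k, hk⟩ := hm
    by_cases h : i.val + 1 = m
    · rw [h, Nat.mod_self]; omega
    · have hlt : i.val + 1 < m := by omega
      rw [Nat.mod_eq_of_lt hlt]; omega
  have hnost : ∀ x : U, x = s ∨ x = t → ∀ (i : ZMod m) (b : U × ZMod m),
      ¬ H.Adj (x, i) b := by
    rintro x hx i ⟨u', j⟩ h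
    by_cases hij : i = j
    · subst hij
      rw [hint] at h
      rcases hx with rfl | rfl
      · exact h.2.1 rfl
      · exact h.2.2.1 rfl
    · rw [hcross i j hij] at h
      rcases h with ⟨_, ⟨h1, _⟩ | ⟨h1, _⟩⟩ | ⟨_, ⟨_, h1⟩ | ⟨_, h1⟩⟩ | ⟨h1, _⟩ <;>
        rcases hx with rfl | rfl
      exacts [hta_s h1.symm, hta_t h1.symm, htb_s h1.symm, htb_t h1.symm,
        hsa_s h1.symm, hsa_t h1.symm, hsb_s h1.symm, hsb_t h1.symm,
        hws h1.symm, hwt' h1.symm]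
  have hwnbr : ∀ u', G.Adj w u' → u' = s ∨ u' = t ∨ u' = vC := by
    intro u' h
    have hsub : ({s, t, vC} : Finset U) ⊆ G.neighborFinset w := by
      intro x hx
      simp only [Finset.mem_insert, Finset.mem_singleton] at hx
      rw [SimpleGraph.mem_neighborFinset]
      rcases hx with rfl | rfl | rfl
      · exact hsw.symm
      · exact hwt
      · exact hvC
    have hcard : ({s, t, vC} : Finset U).card = 3 := by
      rw [Finset.card_insert_of_notMem (by simp [hst, Ne.symm hvC_s]),
        Finset.card_insert_of_notMem (by simp [Ne.symm hvC_t]), Finset.card_singleton]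
    have heq : ({s, t, vC} : Finset U) = G.neighborFinset w :=
      Finset.eq_of_subset_of_card_le hsub
        (by rw [hcard, SimpleGraph.card_neighborFinset_eq_degree, hcubic w])
    have hmemw : u' ∈ ({s, t, vC} : Finset U) := by
      rw [heq, SimpleGraph.mem_neighborFinset]; exact h
    simpa using hmemw
  have hclass : ∀ (u : U) (i : ZMod m) (b : U × ZMod m), H.Adj (u, i) b →
      (∃ u', b = (u', i) ∧ G.Adj u u' ∧ u ≠ s ∧ u ≠ t ∧ u' ≠ s ∧ u' ≠ t) ∨
      (u = ta ∧ b = (sa, i + 1)) ∨ (u = tb ∧ b = (sb, i + 1)) ∨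
      (u = sa ∧ b = (ta, i - 1)) ∨ (u = sb ∧ b = (tb, i - 1)) ∨
      (u = w ∧ (b = (w, i + c) ∨ b = (w, i - c))) := by
    rintro u i ⟨u', j⟩ h
    by_cases hij : i = j
    · subst hij
      rw [hint] at h
      exact Or.inl ⟨u', rfl, h.1, h.2.1, h.2.2.1, h.2.2.2.1, h.2.2.2.2⟩
    · rw [hcross i j hij] at h
      rcases h with ⟨rfl, ⟨rfl, rfl⟩ | ⟨rfl, rfl⟩⟩ | ⟨hi, ⟨rfl, rfl⟩ | ⟨rfl, rfl⟩⟩ |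
        ⟨rfl, rfl, hj⟩
      · exact Or.inr (Or.inl ⟨rfl, rfl⟩)
      · exact Or.inr (Or.inr (Or.inl ⟨rfl, rfl⟩))
      · refine Or.inr (Or.inr (Or.inr (Or.inl ⟨rfl, ?_⟩)))
        rw [hi, add_sub_cancel_right]
      · refine Or.inr (Or.inr (Or.inr (Or.inr (Or.inl ⟨rfl, ?_⟩))))
        rw [hi, add_sub_cancel_right]
      · refine Or.inr (Or.inr (Or.inr (Or.inr (Or.inr ⟨rfl, ?_⟩))))
        rcases hj with rfl | hj
        · exact Or.inl rfl
        · exact Or.inr (by rw [hj, add_sub_cancel_right])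
  let C : ZMod m → Sym2 U → Fin 3 := fun i => if i.val % 2 = 0 then c0L else c0R
  let lg : ZMod m → Fin 3 := fun i => if i.val / Nat.gcd m c % 2 = 0 then 1 else 2
  let conn : ZMod m → U → U → Fin 3 := fun i u u' =>
    if u = ta ∧ u' = sa then (if i.val % 2 = 0 then 1 else 0)
    else if u = tb ∧ u' = sb then (if i.val % 2 = 0 then 2 else 0) else 0
  let f : U × ZMod m → U × ZMod m → Fin 3 := fun p q =>
    if p.2 = q.2 then C p.2 s(p.1, q.1)
    else if p.1 = w ∧ q.1 = w then
      (if q.2 = p.2 + (c : ZMod m) then lg p.2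
       else if p.2 = q.2 + (c : ZMod m) then lg q.2 else 0)
    else if q.2 = p.2 + 1 then conn p.2 p.1 q.1
    else if p.2 = q.2 + 1 then conn q.2 q.1 p.1 else 0
  have hfsymm : ∀ p q, f p q = f q p := by
    rintro ⟨u, i⟩ ⟨u', j⟩
    simp only [f]
    by_cases hij : i = j
    · subst hij
      conv_lhs => rw [if_pos (rfl : (i : ZMod m) = i)]
      conv_rhs => rw [if_pos (rfl : (i : ZMod m) = i)]
      rw [Sym2.eq_swap]
    · conv_lhs => rw [if_neg hij]
      conv_rhs => rw [if_neg (Ne.symm hij)]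
      by_cases hww : u = w ∧ u' = w
      · conv_lhs => rw [if_pos hww]
        conv_rhs => rw [if_pos (⟨hww.2, hww.1⟩ : u' = w ∧ u = w)]
        by_cases h1 : j = i + (c : ZMod m)
        · have h2 : ¬ i = j + (c : ZMod m) := fun h2 =>
            h2cz (by linear_combination - h1 - h2)
          conv_lhs => rw [if_pos h1]
          conv_rhs => rw [if_neg h2, if_pos h1]
        · by_cases h2 : i = j + (c : ZMod m)
          · conv_lhs => rw [if_neg h1, if_pos h2]
            conv_rhs => rw [if_pos h2]
          · conv_lhs => rw [if_neg h1, if_neg h2]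
            conv_rhs => rw [if_neg h2, if_neg h1]
      · have hww' : ¬ (u' = w ∧ u = w) := fun h => hww ⟨h.2, h.1⟩
        conv_lhs => rw [if_neg hww]
        conv_rhs => rw [if_neg hww']
        by_cases h1 : j = i + 1
        · have h2 : ¬ i = j + 1 := fun h2 => h2z (by linear_combination - h1 - h2)
          conv_lhs => rw [if_pos h1]
          conv_rhs => rw [if_neg h2, if_pos h1]
        · by_cases h2 : i = j + 1
          · conv_lhs => rw [if_neg h1, if_pos h2]
            conv_rhs => rw [if_pos h2]
          · conv_lhs => rw [if_neg h1, if_neg h2]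
            conv_rhs => rw [if_neg h2, if_neg h1]
  have hCproper : ∀ i : ZMod m,
      ProperOn (G.edgeSet \ {s(s, w), s(w, t)}) ({s, w, t} : Set U) (C i) := by
    intro i
    simp only [C]
    split_ifs
    · exact hLp
    · exact hRp
  have hCwvC : ∀ i : ZMod m, C i s(w, vC) = 0 := by
    intro i; simp only [C]; split_ifs
    · exact hL3
    · exact hR3
  have fval_int : ∀ (u u' : U) (i : ZMod m), f (u, i) (u', i) = C i s(u, u') := by
    intro u u' i; simp only [f]; rw [if_pos (trivial : True)]
  have hadd1 : ∀ i : ZMod m, ¬ i = i + 1 := fun i h => h1z (by linear_combination - h)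
  have haddc : ∀ i : ZMod m, ¬ i = i + (c : ZMod m) :=
    fun i h => hcz (by linear_combination - h)
  have fval_D1 : ∀ i : ZMod m, f (ta, i) (sa, i + 1) = C i s(t, ta) := by
    intro i
    simp only [f]
    rw [if_neg (hadd1 i), if_neg (fun h : ta = w ∧ sa = w => hta_w h.1),
      if_pos (trivial : True)]
    simp only [conn, C]
    rw [if_pos (⟨trivial, trivial⟩ : True ∧ True)]
    split_ifs
    · rw [hL4]
    · rw [hR4]
  have fval_D2 : ∀ i : ZMod m, f (tb, i) (sb, i + 1) = C i s(t, tb) := by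
    intro i
    simp only [f]
    rw [if_neg (hadd1 i), if_neg (fun h : tb = w ∧ sb = w => htb_w h.1),
      if_pos (trivial : True)]
    simp only [conn, C]
    rw [if_neg (fun h : tb = ta ∧ sb = sa => htab h.1.symm),
      if_pos (⟨trivial, trivial⟩ : True ∧ True)]
    split_ifs
    · rw [hL5]
    · rw [hR5]
  have fval_D3 : ∀ i : ZMod m, f (sa, i) (ta, i - 1) = C i s(s, sa) := by
    intro i
    simp only [f]
    have hx1 : ¬ i = i - 1 := fun h => h1z (by linear_combination h)
    have hx2 : ¬ i - 1 = i + 1 := fun h => h2z (by linear_combination - h)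
    have hx3 : i = i - 1 + 1 := (sub_add_cancel i 1).symm
    rw [if_neg hx1, if_neg (fun h : sa = w ∧ ta = w => hsa_w h.1), if_neg hx2,
      if_pos hx3]
    simp only [conn, C]
    rw [if_pos (⟨trivial, trivial⟩ : True ∧ True)]
    have hp := pflip (i - 1)
    rw [sub_add_cancel] at hp
    by_cases h : (i - 1).val % 2 = 0
    · rw [if_pos h, if_neg (show ¬ i.val % 2 = 0 by omega)]
      rw [hR1]
    · rw [if_neg h, if_pos (show i.val % 2 = 0 by omega)]
      rw [hL1]
  have fval_D4 : ∀ i : ZMod m, f (sb, i) (tb, i - 1) = C i s(s, sb) := by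
    intro i
    simp only [f]
    have hx1 : ¬ i = i - 1 := fun h => h1z (by linear_combination h)
    have hx2 : ¬ i - 1 = i + 1 := fun h => h2z (by linear_combination - h)
    have hx3 : i = i - 1 + 1 := (sub_add_cancel i 1).symm
    rw [if_neg hx1, if_neg (fun h : sb = w ∧ tb = w => hsb_w h.1), if_neg hx2,
      if_pos hx3]
    simp only [conn, C]
    rw [if_neg (fun h : tb = ta ∧ sb = sa => htab h.1.symm),
      if_pos (⟨trivial, trivial⟩ : True ∧ True)]
    have hp := pflip (i - 1)
    rw [sub_add_cancel] at hp
    by_cases h : (i - 1).val % 2 = 0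
    · rw [if_pos h, if_neg (show ¬ i.val % 2 = 0 by omega)]
      rw [hR2]
    · rw [if_neg h, if_pos (show i.val % 2 = 0 by omega)]
      rw [hL2]
  have fval_loopP : ∀ i : ZMod m, f (w, i) (w, i + c) = lg i := by
    intro i
    simp only [f]
    rw [if_neg (haddc i), if_pos (⟨trivial, trivial⟩ : True ∧ True),
      if_pos (trivial : True)]
  have fval_loopM : ∀ i : ZMod m, f (w, i) (w, i - c) = lg (i - c) := by
    intro i
    simp only [f]
    have hx1 : ¬ i = i - c := fun h => hcz (by linear_combination h)
    have hx2 : ¬ i - c = i + c := fun h => h2cz (by linear_combination - h)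
    have hx3 : i = i - c + c := (sub_add_cancel i c).symm
    rw [if_neg hx1, if_pos (⟨trivial, trivial⟩ : True ∧ True), if_neg hx2, if_pos hx3]
  have lg_ne_zero : ∀ i : ZMod m, lg i ≠ 0 := by
    intro i; simp only [lg]; split_ifs <;> decide
  have lg_ne : ∀ i j : ZMod m,
      i.val / Nat.gcd m c % 2 ≠ j.val / Nat.gcd m c % 2 → lg i ≠ lg j := by
    intro i j h; simp only [lg]
    split_ifs <;> first | decide | omega
  have hEta : s(t, ta) ∈ G.edgeSet \ {s(s, w), s(w, t)} := by
    refine ⟨G.mem_edgeSet.mpr hta, ?_⟩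
    simp only [Set.mem_insert_iff, Set.mem_singleton_iff, Sym2.eq_iff]
    rintro ((⟨h1, h2⟩ | ⟨h1, h2⟩) | (⟨h1, h2⟩ | ⟨h1, h2⟩))
    exacts [hts h1, hwt' h1.symm, hwt' h1.symm, hta_w h2]
  have hEtb : s(t, tb) ∈ G.edgeSet \ {s(s, w), s(w, t)} := by
    refine ⟨G.mem_edgeSet.mpr htb, ?_⟩
    simp only [Set.mem_insert_iff, Set.mem_singleton_iff, Sym2.eq_iff]
    rintro ((⟨h1, h2⟩ | ⟨h1, h2⟩) | (⟨h1, h2⟩ | ⟨h1, h2⟩))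
    exacts [hts h1, hwt' h1.symm, hwt' h1.symm, htb_w h2]
  have hEsa : s(s, sa) ∈ G.edgeSet \ {s(s, w), s(w, t)} := by
    refine ⟨G.mem_edgeSet.mpr hsa, ?_⟩
    simp only [Set.mem_insert_iff, Set.mem_singleton_iff, Sym2.eq_iff]
    rintro ((⟨h1, h2⟩ | ⟨h1, h2⟩) | (⟨h1, h2⟩ | ⟨h1, h2⟩))
    exacts [hsa_w h2, hws h1.symm, hws h1.symm, hst h1]
  have hEsb : s(s, sb) ∈ G.edgeSet \ {s(s, w), s(w, t)} := by
    refine ⟨G.mem_edgeSet.mpr hsb, ?_⟩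
    simp only [Set.mem_insert_iff, Set.mem_singleton_iff, Sym2.eq_iff]
    rintro ((⟨h1, h2⟩ | ⟨h1, h2⟩) | (⟨h1, h2⟩ | ⟨h1, h2⟩))
    exacts [hsb_w h2, hws h1.symm, hws h1.symm, hst h1]
  have hmemInt : ∀ x y : U, G.Adj x y → x ≠ s → x ≠ w → x ≠ t →
      s(x, y) ∈ G.edgeSet \ {s(s, w), s(w, t)} := by
    intro x y hxy h1 h2 h3
    refine ⟨G.mem_edgeSet.mpr hxy, ?_⟩
    simp only [Set.mem_insert_iff, Set.mem_singleton_iff, Sym2.eq_iff]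
    rintro ((⟨ha, hb⟩ | ⟨ha, hb⟩) | (⟨ha, hb⟩ | ⟨ha, hb⟩))
    exacts [h1 ha, h2 ha, h2 ha, h3 ha]
  have hint_ne : ∀ x y a' b' : U, x ≠ a' → y ≠ a' → s(x, y) ≠ s(a', b') := by
    intro x y a' b' h1 h2 h
    rw [Sym2.eq_iff] at h
    rcases h with ⟨h3, _⟩ | ⟨_, h4⟩
    exacts [h1 h3, h2 h4]
  have key : ∀ v a b : U × ZMod m, H.Adj v a → H.Adj v b → a ≠ b → f v a ≠ f v b := by
    rintro ⟨u, i⟩ a b ha hb hab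
    by_cases hus : u = s
    · refine absurd ha ?_
      rw [hus]
      exact hnost s (Or.inl rfl) i a
    by_cases hut : u = t
    · refine absurd ha ?_
      rw [hut]
      exact hnost t (Or.inr rfl) i a
    by_cases huw : u = w
    · obtain rfl := huw.symm
      have hcw : ∀ x : U × ZMod m, H.Adj (w, i) x →
          x = (vC, i) ∨ x = (w, i + c) ∨ x = (w, i - c) := by
        intro x hx
        rcases hclass w i x hx with ⟨u', rfl, h1, _, _, h4, h5⟩ | ⟨h1, _⟩ | ⟨h1, _⟩ |
          ⟨h1, _⟩ | ⟨h1, _⟩ | ⟨_, h1⟩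
        · rcases hwnbr u' h1 with rfl | rfl | rfl
          · exact absurd rfl h4
          · exact absurd rfl h5
          · exact Or.inl rfl
        · exact absurd h1.symm hta_w
        · exact absurd h1.symm htb_w
        · exact absurd h1.symm hsa_w
        · exact absurd h1.symm hsb_w
        · exact Or.inr h1
      have hphi' : i.val / Nat.gcd m c % 2 ≠ (i - c).val / Nat.gcd m c % 2 := by
        have h := hphi (i - c)
        rwa [sub_add_cancel] at h
      rcases hcw a ha with rfl | rfl | rfl <;> rcases hcw b hb with rfl | rfl | rfl
      · exact absurd rfl hab
      · rw [fval_int, fval_loopP, hCwvC]; exact (lg_ne_zero i).symm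
      · rw [fval_int, fval_loopM, hCwvC]; exact (lg_ne_zero (i - c)).symm
      · rw [fval_loopP, fval_int, hCwvC]; exact lg_ne_zero i
      · exact absurd rfl hab
      · rw [fval_loopP, fval_loopM]; exact lg_ne i (i - c) hphi'
      · rw [fval_loopM, fval_int, hCwvC]; exact lg_ne_zero (i - c)
      · rw [fval_loopM, fval_loopP]; exact lg_ne (i - c) i hphi'.symm
      · exact absurd rfl hab
    · have main : ∀ E₁ E₂ : Sym2 U, E₁ ∈ G.edgeSet \ {s(s, w), s(w, t)} →
          E₂ ∈ G.edgeSet \ {s(s, w), s(w, t)} → E₁ ≠ E₂ → u ∈ E₁ → u ∈ E₂ →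
          C i E₁ ≠ C i E₂ := by
        intro E₁ E₂ h1 h2 h12 hu1 hu2
        exact hCproper i E₁ h1 E₂ h2 h12 ⟨u, by simp [hus, huw, hut], hu1, hu2⟩
      rcases hclass u i a ha with ⟨u₁, rfl, hA1, -, -, hA4, hA5⟩ | ⟨hu, rfl⟩ |
        ⟨hu, rfl⟩ | ⟨hu, rfl⟩ | ⟨hu, rfl⟩ | ⟨hu, -⟩
      · -- A internal
        rcases hclass u i b hb with ⟨u₂, rfl, hB1, -, -, hB4, hB5⟩ | ⟨hu, rfl⟩ |
          ⟨hu, rfl⟩ | ⟨hu, rfl⟩ | ⟨hu, rfl⟩ | ⟨hu, -⟩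
        · have h12 : u₁ ≠ u₂ := fun hx => hab (by rw [hx])
          rw [fval_int, fval_int]
          refine main _ _ (hmemInt u u₁ hA1 hus huw hut) (hmemInt u u₂ hB1 hus huw hut)
            ?_ (Sym2.mem_mk_left u u₁) (Sym2.mem_mk_left u u₂)
          intro hx
          rw [Sym2.eq_iff] at hx
          rcases hx with ⟨-, h2⟩ | ⟨h2, h3⟩
          · exact h12 h2
          · exact h12 (h3.trans h2)
        · obtain rfl := hu.symm
          rw [fval_int, fval_D1]
          exact main _ _ (hmemInt ta u₁ hA1 hus huw hut) hEta
            (hint_ne ta u₁ t ta hut hA5) (Sym2.mem_mk_left _ _) (Sym2.mem_mk_right _ _)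
        · obtain rfl := hu.symm
          rw [fval_int, fval_D2]
          exact main _ _ (hmemInt tb u₁ hA1 hus huw hut) hEtb
            (hint_ne tb u₁ t tb hut hA5) (Sym2.mem_mk_left _ _) (Sym2.mem_mk_right _ _)
        · obtain rfl := hu.symm
          rw [fval_int, fval_D3]
          exact main _ _ (hmemInt sa u₁ hA1 hus huw hut) hEsa
            (hint_ne sa u₁ s sa hus hA4) (Sym2.mem_mk_left _ _) (Sym2.mem_mk_right _ _)
        · obtain rfl := hu.symm
          rw [fval_int, fval_D4]
          exact main _ _ (hmemInt sb u₁ hA1 hus huw hut) hEsb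
            (hint_ne sb u₁ s sb hus hA4) (Sym2.mem_mk_left _ _) (Sym2.mem_mk_right _ _)
        · exact absurd hu huw
      · -- A = D1, u = ta
        obtain rfl := hu.symm
        rcases hclass ta i b hb with ⟨u₂, rfl, hB1, -, -, hB4, hB5⟩ | ⟨-, rfl⟩ |
          ⟨h, rfl⟩ | ⟨h, rfl⟩ | ⟨h, rfl⟩ | ⟨h, -⟩
        · rw [fval_D1, fval_int]
          exact main _ _ hEta (hmemInt ta u₂ hB1 hus huw hut)
            (hint_ne ta u₂ t ta hut hB5).symm (Sym2.mem_mk_right _ _) (Sym2.mem_mk_left _ _)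
        · exact absurd rfl hab
        · exact absurd h htab
        · subst h
          rw [fval_D1, fval_D3]
          exact main _ _ hEta hEsa (hint_ne _ _ _ _ hts hta_s)
            (Sym2.mem_mk_right _ _) (Sym2.mem_mk_right _ _)
        · subst h
          rw [fval_D1, fval_D4]
          exact main _ _ hEta hEsb (hint_ne _ _ _ _ hts hta_s)
            (Sym2.mem_mk_right _ _) (Sym2.mem_mk_right _ _)
        · exact absurd h huw
      · -- A = D2, u = tb
        obtain rfl := hu.symm
        rcases hclass tb i b hb with ⟨u₂, rfl, hB1, -, -, hB4, hB5⟩ | ⟨h, rfl⟩ |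
          ⟨-, rfl⟩ | ⟨h, rfl⟩ | ⟨h, rfl⟩ | ⟨h, -⟩
        · rw [fval_D2, fval_int]
          exact main _ _ hEtb (hmemInt tb u₂ hB1 hus huw hut)
            (hint_ne tb u₂ t tb hut hB5).symm (Sym2.mem_mk_right _ _) (Sym2.mem_mk_left _ _)
        · exact absurd h.symm htab
        · exact absurd rfl hab
        · subst h
          rw [fval_D2, fval_D3]
          exact main _ _ hEtb hEsa (hint_ne _ _ _ _ hts htb_s)
            (Sym2.mem_mk_right _ _) (Sym2.mem_mk_right _ _)
        · subst h
          rw [fval_D2, fval_D4]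
          exact main _ _ hEtb hEsb (hint_ne _ _ _ _ hts htb_s)
            (Sym2.mem_mk_right _ _) (Sym2.mem_mk_right _ _)
        · exact absurd h huw
      · -- A = D3, u = sa
        obtain rfl := hu.symm
        rcases hclass sa i b hb with ⟨u₂, rfl, hB1, -, -, hB4, hB5⟩ | ⟨h, rfl⟩ |
          ⟨h, rfl⟩ | ⟨-, rfl⟩ | ⟨h, rfl⟩ | ⟨h, -⟩
        · rw [fval_D3, fval_int]
          exact main _ _ hEsa (hmemInt sa u₂ hB1 hus huw hut)
            (hint_ne sa u₂ s sa hus hB4).symm (Sym2.mem_mk_right _ _) (Sym2.mem_mk_left _ _)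
        · subst h
          rw [fval_D3, fval_D1]
          exact main _ _ hEsa hEta (hint_ne _ _ _ _ hst hsa_t)
            (Sym2.mem_mk_right _ _) (Sym2.mem_mk_right _ _)
        · subst h
          rw [fval_D3, fval_D2]
          exact main _ _ hEsa hEtb (hint_ne _ _ _ _ hst hsa_t)
            (Sym2.mem_mk_right _ _) (Sym2.mem_mk_right _ _)
        · exact absurd rfl hab
        · exact absurd h hsab
        · exact absurd h huw
      · -- A = D4, u = sb
        obtain rfl := hu.symm
        rcases hclass sb i b hb with ⟨u₂, rfl, hB1, -, -, hB4, hB5⟩ | ⟨h, rfl⟩ |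
          ⟨h, rfl⟩ | ⟨h, rfl⟩ | ⟨-, rfl⟩ | ⟨h, -⟩
        · rw [fval_D4, fval_int]
          exact main _ _ hEsb (hmemInt sb u₂ hB1 hus huw hut)
            (hint_ne sb u₂ s sb hus hB4).symm (Sym2.mem_mk_right _ _) (Sym2.mem_mk_left _ _)
        · subst h
          rw [fval_D4, fval_D1]
          exact main _ _ hEsb hEta (hint_ne _ _ _ _ hst hsb_t)
            (Sym2.mem_mk_right _ _) (Sym2.mem_mk_right _ _)
        · subst h
          rw [fval_D4, fval_D2]
          exact main _ _ hEsb hEtb (hint_ne _ _ _ _ hst hsb_t)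
            (Sym2.mem_mk_right _ _) (Sym2.mem_mk_right _ _)
        · exact absurd h.symm hsab
        · exact absurd rfl hab
        · exact absurd h huw
      · exact absurd hu huw
  refine ⟨Sym2.lift ⟨f, hfsymm⟩, ?_⟩
  intro e₁ he₁ e₂ he₂ hne hshare
  obtain ⟨v, -, hv₁, hv₂⟩ := hshare
  obtain ⟨a, ha⟩ : ∃ a, s(v, a) = e₁ := ⟨Sym2.Mem.other hv₁, Sym2.other_spec hv₁⟩
  obtain ⟨b, hb⟩ : ∃ b, s(v, b) = e₂ := ⟨Sym2.Mem.other hv₂, Sym2.other_spec hv₂⟩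
  subst ha hb
  rw [Sym2.lift_mk, Sym2.lift_mk]
  exact key v a b (H.mem_edgeSet.mp he₁) (H.mem_edgeSet.mp he₂)
    (fun h => hne (by rw [h]))
end

section
/- If a color string C of length m (over colors {1,2,3}) assigned to the spokes of G_α(m;1,1,1) contains, cyclically, a substring of the form x y...y x with an odd number (≥1) of y's, where x ≠ y, then the induced coloring of the inner loop m-cycle requires a fourth color; consequently the string index χ_C equals 4. -/
lemma fin3_unique (p q a b : Fin 3) (hpq : p ≠ q) (hap : a ≠ p) (haq : a ≠ q)
    (hbp : b ≠ p) (hbq : b ≠ q) : a = b := by revert hpq hap haq hbp hbq; revert p q a b; decide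

/-- If the spoke color string `C` of `G_α(m;1,1,1)` contains (cyclically) a
substring `x y ⋯ y x` with an odd number (≥ 1) of `y`'s, `x ≠ y`, then the
induced coloring of the inner loop `m`-cycle requires a fourth color: there is
no assignment `L` of colors to the loop edges (`L i` colors the edge
`wᵢ w_{i+1}`) avoiding the two incident spoke colors and the adjacent loop
edge colors.  Consequently the string index `χ_C = 4`. -/
theorem forbidden_substring_xyx (m : ℕ) [NeZero m] (hm : 3 ≤ m)
    (C : ZMod m → Fin 3) (x y : Fin 3) (hxy : x ≠ y)
    (i₀ : ZMod m) (k : ℕ) (hk : Odd k) (hk1 : 1 ≤ k) (hkm : k + 2 ≤ m)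
    (hstart : C i₀ = x)
    (hend : C (i₀ + (k : ZMod m) + 1) = x)
    (hmid : ∀ j : ℕ, 1 ≤ j → j ≤ k → C (i₀ + (j : ZMod m)) = y) :
    ¬ ∃ L : ZMod m → Fin 3,
        ∀ i : ZMod m, L i ≠ C i ∧ L i ≠ C (i + 1) ∧ L i ≠ L (i + 1) := by
  rintro ⟨L, hL⟩
  set z := L i₀ with hzdef
  have hC1 : C (i₀ + 1) = y := by
    have := hmid 1 le_rfl hk1
    simpa using this
  have hzx : z ≠ x := hstart ▸ (hL i₀).1
  have hzy : z ≠ y := hC1 ▸ (hL i₀).2.1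
  -- main claim by induction
  have key : ∀ j : ℕ, j ≤ k → L (i₀ + (j : ZMod m)) = if Even j then z else x := by
    intro j
    induction j with
    | zero => intro _; simp [hzdef]
    | succ j ih =>
      intro hjk
      have hLj := ih (Nat.le_of_succ_le hjk)
      have hCj1 : C (i₀ + ((j + 1 : ℕ) : ZMod m)) = y := hmid (j + 1) (by omega) hjk
      have hne1 : L (i₀ + ((j + 1 : ℕ) : ZMod m)) ≠ y := hCj1 ▸ (hL _).1
      have hcast : i₀ + ((j + 1 : ℕ) : ZMod m) = (i₀ + (j : ZMod m)) + 1 := by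
        push_cast; ring
      have hne2 : L (i₀ + ((j + 1 : ℕ) : ZMod m)) ≠ L (i₀ + (j : ZMod m)) := by
        rw [hcast]
        exact fun h => (hL (i₀ + (j : ZMod m))).2.2 h.symm
      rcases Nat.even_or_odd j with he | ho
      · rw [if_pos he] at hLj
        rw [if_neg (by simp [Nat.even_add_one, he])]
        rw [hLj] at hne2
        exact fin3_unique z y _ x hzy hne2 hne1 (Ne.symm hzx) hxy
      · rw [if_neg (Nat.not_even_iff_odd.mpr ho)] at hLj
        rw [if_pos (by simp [Nat.even_add_one, Nat.not_even_iff_odd.mpr ho])]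
        rw [hLj] at hne2
        exact fin3_unique x y _ z hxy hne2 hne1 hzx hzy
  have hk' := key k le_rfl
  rw [if_neg (Nat.not_even_iff_odd.mpr hk)] at hk'
  have := (hL (i₀ + (k : ZMod m))).2.1
  rw [hk', hend] at this
  exact this rfl
end

section
/- If a cyclic color string C of length m over {1,2,3} contains a substring of the form x y...y z with an even number (≥2) of y's, where x, y, z are pairwise distinct, then there is no assignment of colors from {1,2,3} to the edges of the inner loop m-cycle such that each loop edge w_i w_{i+1} differs from c_i, c_{i+1}, and its two neighboring loop edges. -/
/-- If the cyclic color string `C` contains a substring `x y ⋯ y z` with an even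
number (≥ 2) of `y`'s and `x, y, z` pairwise distinct, then there is no
assignment `L` of colors to the edges of the inner loop `m`-cycle (`L i` colors
the edge `wᵢ w_{i+1}`) such that each loop edge avoids the colors of the two
incident spokes and of the adjacent loop edges. -/
theorem forbidden_substring_xyyz (m : ℕ) [NeZero m] (hm : 3 ≤ m)
    (C : ZMod m → Fin 3) (x y z : Fin 3)
    (hxy : x ≠ y) (hxz : x ≠ z) (hyz : y ≠ z)
    (i₀ : ZMod m) (k : ℕ) (hk : Even k) (hk1 : 2 ≤ k) (hkm : k + 2 ≤ m)
    (hstart : C i₀ = x)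
    (hend : C (i₀ + (k : ZMod m) + 1) = z)
    (hmid : ∀ j : ℕ, 1 ≤ j → j ≤ k → C (i₀ + (j : ZMod m)) = y) :
    ¬ ∃ L : ZMod m → Fin 3,
        ∀ i : ZMod m, L i ≠ C i ∧ L i ≠ C (i + 1) ∧ L i ≠ L (i + 1) := by
  rintro ⟨L, hL⟩
  have three : ∀ (a b c w : Fin 3), a ≠ b → a ≠ c → b ≠ c → w ≠ a → w ≠ b → w = c := by
    intro a b c w
    fin_cases a <;> fin_cases b <;> fin_cases c <;> fin_cases w <;> decide
  have key : ∀ j : ℕ, j < k → L (i₀ + (j : ZMod m)) = if Even j then z else x := by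
    intro j
    induction j with
    | zero =>
      intro _
      simp only [Nat.cast_zero, add_zero, if_pos Even.zero]
      obtain ⟨h1, h2, -⟩ := hL i₀
      rw [hstart] at h1
      rw [show i₀ + 1 = i₀ + ((1 : ℕ) : ZMod m) by push_cast; ring,
        hmid 1 le_rfl (by omega)] at h2
      exact three x y z _ hxy hxz hyz h1 h2
    | succ j ih =>
      intro hj
      have prev := ih (Nat.lt_of_succ_lt hj)
      obtain ⟨-, -, h3⟩ := hL (i₀ + (j : ZMod m))
      obtain ⟨h1, -, -⟩ := hL (i₀ + ((j + 1 : ℕ) : ZMod m))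
      rw [show i₀ + (j : ZMod m) + 1 = i₀ + ((j + 1 : ℕ) : ZMod m) by push_cast; ring] at h3
      rw [hmid (j + 1) (by omega) (by omega)] at h1
      rcases Nat.even_or_odd j with he | ho
      · rw [if_pos he] at prev
        rw [if_neg (by simp [Nat.even_add_one, he])]
        rw [prev] at h3
        exact three y z x _ hyz hxy.symm hxz.symm h1 h3.symm
      · rw [if_neg (Nat.not_even_iff_odd.mpr ho)] at prev
        rw [if_pos (by simpa [Nat.even_add_one] using Nat.not_even_iff_odd.mpr ho)]
        rw [prev] at h3
        exact three y x z _ hxy.symm hyz hxz h1 h3.symm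
  have hprev := key (k - 1) (by omega)
  have hodd : ¬ Even (k - 1) := by
    rw [Nat.even_sub (by omega : 1 ≤ k)]
    simp [hk, Nat.not_even_one]
  rw [if_neg hodd] at hprev
  obtain ⟨-, -, h3⟩ := hL (i₀ + ((k - 1 : ℕ) : ZMod m))
  have hcast : i₀ + ((k - 1 : ℕ) : ZMod m) + 1 = i₀ + (k : ZMod m) := by
    conv_rhs => rw [show k = (k - 1) + 1 by omega]
    push_cast
    ring
  rw [hcast, hprev] at h3
  obtain ⟨h1, h2, -⟩ := hL (i₀ + (k : ZMod m))
  rw [hmid k (by omega) le_rfl] at h1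
  rw [hend] at h2
  exact h3 (three y z x _ hyz hxy.symm hxz.symm h1 h2).symm
end

section
/- Let G be a 5-pole whose only admissible color patterns are TwoLeft, TwoRight, AltTop, and AltBot (in each of which the spoke receives the color repeated among the four connecting semiedges). Then for every odd m ≥ 3, the Z_m lift G_α(m; 1, 1, 1) is a snark (has chromatic index 4). -/
/-- The four color patterns `TwoLeft` `[(x,x),(y,z)]`, `TwoRight` `[(y,z),(x,x)]`,
`AltTop` `[(x,y),(x,z)]` and `AltBot` `[(y,x),(z,x)]`, always with the spoke
colored `x` (as `y,z` range over both orderings of the two colors other than `x`,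
this covers all variants). -/
def AdmissiblePattern (x : Fin 3) (inp out : Fin 3 × Fin 3) : Prop :=
  ∃ y z : Fin 3, y ≠ z ∧ y ≠ x ∧ z ≠ x ∧
    ((inp = (x, x) ∧ out = (y, z)) ∨
     (inp = (y, z) ∧ out = (x, x)) ∨
     (inp = (x, y) ∧ out = (x, z)) ∨
     (inp = (y, x) ∧ out = (z, x)))

instance (x : Fin 3) (p q : Fin 3 × Fin 3) : Decidable (AdmissiblePattern x p q) := by
  unfold AdmissiblePattern; infer_instance

/-- The parity invariant on states `(w`-edge color, output pair`)`. -/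
def fInv (e p q : Fin 3) : Bool :=
  match e, p, q with
  | 0, 2, 1 => true | 0, 2, 2 => true
  | 1, 0, 2 => true | 1, 1, 2 => true | 1, 2, 1 => true | 1, 2, 2 => true
  | 2, 0, 2 => true | 2, 1, 0 => true | 2, 1, 1 => true | 2, 1, 2 => true
  | 2, 2, 0 => true | 2, 2, 1 => true
  | _, _, _ => false

/-- Every admissible transition flips the invariant. -/
theorem step_flip : ∀ a b x p1 p2 q1 q2 : Fin 3, a ≠ b → x ≠ a → x ≠ b →
    AdmissiblePattern x (p1, p2) (q1, q2) → fInv b q1 q2 = !fInv a p1 p2 := by decide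

theorem sym2_ne_of {α : Type*} {a b c d : α} (h1 : ¬(a = c ∧ b = d))
    (h2 : ¬(a = d ∧ b = c)) : s(a, b) ≠ s(c, d) := by
  intro h; rw [Sym2.eq_iff] at h; tauto

/-- A function over `ZMod m` which flips a boolean at every step contradicts odd `m`. -/
theorem parity_contra {m : ℕ} [NeZero m] (hmodd : Odd m) (F : ZMod m → Bool)
    (hstep : ∀ i, F (i + 1) = !F i) : False := by
  have key : ∀ n : ℕ, F (n : ZMod m) = xor (decide (n % 2 = 1)) (F 0) := by
    intro n
    induction n with
    | zero => simp
    | succ k ih =>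
      have hcast : ((k + 1 : ℕ) : ZMod m) = (k : ZMod m) + 1 := by push_cast; ring
      rw [hcast, hstep, ih]
      rcases Nat.mod_two_eq_zero_or_one k with h | h
      · have h' : (k + 1) % 2 = 1 := by omega
        simp [h, h']
      · have h' : (k + 1) % 2 = 0 := by omega
        simp [h, h']
  have hm0 := key m
  rw [ZMod.natCast_self, Nat.odd_iff.mp hmodd] at hm0
  simp at hm0

/-- The lifted image of a 5-pole edge in layer `i → i+1` of the lift. -/
def phi {U : Type*} [DecidableEq U] {m : ℕ} (s t sa sb ta tb : U) (i : ZMod m) :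
    Sym2 U → Sym2 (U × ZMod m) := fun e =>
  if e = s(s, sa) then s((ta, i), (sa, i + 1))
  else if e = s(s, sb) then s((tb, i), (sb, i + 1))
  else if e = s(t, ta) then s((ta, i + 1), (sa, i + 1 + 1))
  else if e = s(t, tb) then s((tb, i + 1), (sb, i + 1 + 1))
  else Sym2.map (fun u => (u, i + 1)) e

/-- Left inverse of `phi`. -/
def psi {U : Type*} [DecidableEq U] {m : ℕ} (s t sa sb ta tb : U) (i : ZMod m) :
    Sym2 (U × ZMod m) → Sym2 U := fun E =>
  if E = s((ta, i), (sa, i + 1)) then s(s, sa)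
  else if E = s((tb, i), (sb, i + 1)) then s(s, sb)
  else if E = s((ta, i + 1), (sa, i + 1 + 1)) then s(t, ta)
  else if E = s((tb, i + 1), (sb, i + 1 + 1)) then s(t, tb)
  else Sym2.map Prod.fst E

/-- **Theorem 5.2 (generalized).**  Let `G` be a cubic graph containing a path
`s — w — t`, yielding a 5-pole with input pair `A = s·sa`, `B = s·sb`, output
pair `A' = t·ta`, `B' = t·tb`, and spoke `C = w·vC`, whose only admissible color
patterns are `TwoLeft`, `TwoRight`, `AltTop` and `AltBot` (in each of which the
spoke receives the repeated color).  Then for every odd `m ≥ 3`, the `ZMod m`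
lift `G_α(m; 1, 1, 1)` is a snark: it has no proper 3-edge-coloring. -/
theorem G_alpha_odd_lift_snark {U : Type*} [Fintype U] [DecidableEq U]
    (G : SimpleGraph U) [DecidableRel G.Adj]
    (hcubic : ∀ v : U, G.degree v = 3)
    (s w t sa sb ta tb vC : U)
    (hsw : G.Adj s w) (hwt : G.Adj w t) (hst : s ≠ t)
    (hsa : G.Adj s sa) (hsb : G.Adj s sb) (hsab : sa ≠ sb)
    (hta : G.Adj t ta) (htb : G.Adj t tb) (htab : ta ≠ tb)
    (hvC : G.Adj w vC)
    (houter : ∀ u ∈ ({sa, sb, ta, tb, vC} : Set U), u ≠ s ∧ u ≠ w ∧ u ≠ t)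
    -- the only admissible color patterns of the 5-pole are the four pattern types
    (honly : ∀ c0 : Sym2 U → Fin 3,
      ProperOn (G.edgeSet \ {s(s, w), s(w, t)}) ({s, w, t} : Set U) c0 →
      AdmissiblePattern (c0 s(w, vC)) (c0 s(s, sa), c0 s(s, sb))
        (c0 s(t, ta), c0 s(t, tb)))
    (m : ℕ) [NeZero m] (hmodd : Odd m) (hm : 3 ≤ m)
    (H : SimpleGraph (U × ZMod m))
    (hint : ∀ (i : ZMod m) (u u' : U),
      H.Adj (u, i) (u', i) ↔ (G.Adj u u' ∧ u ≠ s ∧ u ≠ t ∧ u' ≠ s ∧ u' ≠ t))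
    (hcross : ∀ (i j : ZMod m), i ≠ j → ∀ u u' : U,
      H.Adj (u, i) (u', j) ↔
        ((j = i + 1 ∧ ((u = ta ∧ u' = sa) ∨ (u = tb ∧ u' = sb))) ∨
         (i = j + 1 ∧ ((u' = ta ∧ u = sa) ∨ (u' = tb ∧ u = sb))) ∨
         (u = w ∧ u' = w ∧ (j = i + 1 ∨ i = j + 1)))) :
    ¬ ∃ col : Sym2 (U × ZMod m) → Fin 3,
        ProperOn H.edgeSet (∅ : Set (U × ZMod m)) col := by
  rintro ⟨col, hcol⟩
  -- name the outer-vertex distinctness facts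
  obtain ⟨hsas, hsaw, hsat⟩ := houter sa (by simp)
  obtain ⟨hsbs, hsbw, hsbt⟩ := houter sb (by simp)
  obtain ⟨htas, htaw, htat⟩ := houter ta (by simp)
  obtain ⟨htbs, htbw, htbt⟩ := houter tb (by simp)
  obtain ⟨hvCs, hvCw, hvCt⟩ := houter vC (by simp)
  have hws : w ≠ s := hsw.ne'
  have hwt2 : w ≠ t := hwt.ne
  -- ZMod facts
  haveI : Fact (1 < m) := ⟨by omega⟩
  have h1 : (1 : ZMod m) ≠ 0 := one_ne_zero
  have h2 : (2 : ZMod m) ≠ 0 := by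
    intro h
    have h' : ((2 : ℕ) : ZMod m) = 0 := by push_cast; exact h
    have := (ZMod.natCast_eq_zero_iff 2 m).mp h'
    have := Nat.le_of_dvd (by norm_num) this
    omega
  have hne01 : ∀ i : ZMod m, i ≠ i + 1 := by
    intro i h
    have h' : (0 : ZMod m) = 1 := by simpa using congrArg (· - i) h
    exact h1 h'.symm
  have hne02 : ∀ i : ZMod m, i ≠ i + 1 + 1 := by
    intro i h
    rw [add_assoc] at h
    have h' : (0 : ZMod m) = 1 + 1 := by simpa using congrArg (· - i) h
    exact h2 (by rw [← one_add_one_eq_two]; exact h'.symm)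
  -- neighbors of s and t
  have hNs : ∀ u, G.Adj s u → u = w ∨ u = sa ∨ u = sb := by
    intro u hu
    have hsub : ({w, sa, sb} : Finset U) ⊆ G.neighborFinset s := by
      intro x hx
      simp only [Finset.mem_insert, Finset.mem_singleton] at hx
      rw [SimpleGraph.mem_neighborFinset]
      rcases hx with rfl | rfl | rfl
      exacts [hsw, hsa, hsb]
    have hw1 : w ∉ ({sa, sb} : Finset U) := by
      simp only [Finset.mem_insert, Finset.mem_singleton]
      push_neg
      exact ⟨fun h => hsaw h.symm, fun h => hsbw h.symm⟩
    have hw2 : sa ∉ ({sb} : Finset U) := by simpa using hsab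
    have hcard : ({w, sa, sb} : Finset U).card = 3 := by
      rw [Finset.card_insert_of_notMem hw1, Finset.card_insert_of_notMem hw2,
        Finset.card_singleton]
    have heq : ({w, sa, sb} : Finset U) = G.neighborFinset s := by
      apply Finset.eq_of_subset_of_card_le hsub
      rw [hcard, SimpleGraph.card_neighborFinset_eq_degree, hcubic s]
    have hmem : u ∈ G.neighborFinset s := by
      rw [SimpleGraph.mem_neighborFinset]; exact hu
    rw [← heq] at hmem
    simpa using hmem
  have hNt : ∀ u, G.Adj t u → u = w ∨ u = ta ∨ u = tb := by
    intro u hu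
    have hsub : ({w, ta, tb} : Finset U) ⊆ G.neighborFinset t := by
      intro x hx
      simp only [Finset.mem_insert, Finset.mem_singleton] at hx
      rw [SimpleGraph.mem_neighborFinset]
      rcases hx with rfl | rfl | rfl
      exacts [hwt.symm, hta, htb]
    have hw1 : w ∉ ({ta, tb} : Finset U) := by
      simp only [Finset.mem_insert, Finset.mem_singleton]
      push_neg
      exact ⟨fun h => htaw h.symm, fun h => htbw h.symm⟩
    have hw2 : ta ∉ ({tb} : Finset U) := by simpa using htab
    have hcard : ({w, ta, tb} : Finset U).card = 3 := by
      rw [Finset.card_insert_of_notMem hw1, Finset.card_insert_of_notMem hw2,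
        Finset.card_singleton]
    have heq : ({w, ta, tb} : Finset U) = G.neighborFinset t := by
      apply Finset.eq_of_subset_of_card_le hsub
      rw [hcard, SimpleGraph.card_neighborFinset_eq_degree, hcubic t]
    have hmem : u ∈ G.neighborFinset t := by
      rw [SimpleGraph.mem_neighborFinset]; exact hu
    rw [← heq] at hmem
    simpa using hmem
  -- classification of 5-pole edges
  have hclass : ∀ e ∈ G.edgeSet \ ({s(s, w), s(w, t)} : Set (Sym2 U)),
      e = s(s, sa) ∨ e = s(s, sb) ∨ e = s(t, ta) ∨ e = s(t, tb) ∨ (s ∉ e ∧ t ∉ e) := by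
    intro e he
    obtain ⟨heE, heN⟩ := he
    have hesw : e ≠ s(s, w) := fun h => heN (by rw [h]; exact Set.mem_insert _ _)
    have hewt : e ≠ s(w, t) := fun h => heN (by rw [h]; exact Set.mem_insert_of_mem _ rfl)
    revert heE hesw hewt
    induction e using Sym2.ind with
    | _ u₁ u₂ =>
      intro heE hesw hewt
      rw [SimpleGraph.mem_edgeSet] at heE
      by_cases hc1 : u₁ = s
      · subst hc1
        rcases hNs u₂ heE with rfl | rfl | rfl
        · exact absurd rfl hesw
        · exact Or.inl rfl
        · exact Or.inr (Or.inl rfl)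
      · by_cases hc2 : u₂ = s
        · subst hc2
          rcases hNs u₁ heE.symm with rfl | rfl | rfl
          · exact absurd Sym2.eq_swap hesw
          · exact Or.inl Sym2.eq_swap
          · exact Or.inr (Or.inl Sym2.eq_swap)
        · by_cases hc3 : u₁ = t
          · subst hc3
            rcases hNt u₂ heE with rfl | rfl | rfl
            · exact absurd Sym2.eq_swap hewt
            · exact Or.inr (Or.inr (Or.inl rfl))
            · exact Or.inr (Or.inr (Or.inr (Or.inl rfl)))
          · by_cases hc4 : u₂ = t
            · subst hc4
              rcases hNt u₁ heE.symm with rfl | rfl | rfl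
              · exact absurd rfl hewt
              · exact Or.inr (Or.inr (Or.inl Sym2.eq_swap))
              · exact Or.inr (Or.inr (Or.inr (Or.inl Sym2.eq_swap)))
            · refine Or.inr (Or.inr (Or.inr (Or.inr ⟨?_, ?_⟩)))
              · rw [Sym2.mem_iff]; push_neg
                exact ⟨fun h => hc1 h.symm, fun h => hc2 h.symm⟩
              · rw [Sym2.mem_iff]; push_neg
                exact ⟨fun h => hc3 h.symm, fun h => hc4 h.symm⟩
  -- distinctness of the special 5-pole edges
  have nBA : s(s, sb) ≠ s(s, sa) :=
    sym2_ne_of (fun ⟨_, h⟩ => hsab h.symm) (fun ⟨h, _⟩ => hsas h.symm)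
  have nCA : s(t, ta) ≠ s(s, sa) :=
    sym2_ne_of (fun ⟨h, _⟩ => hst h.symm) (fun ⟨h, _⟩ => hsat h.symm)
  have nCB : s(t, ta) ≠ s(s, sb) :=
    sym2_ne_of (fun ⟨h, _⟩ => hst h.symm) (fun ⟨h, _⟩ => hsbt h.symm)
  have nDA : s(t, tb) ≠ s(s, sa) :=
    sym2_ne_of (fun ⟨h, _⟩ => hst h.symm) (fun ⟨h, _⟩ => hsat h.symm)
  have nDB : s(t, tb) ≠ s(s, sb) :=
    sym2_ne_of (fun ⟨h, _⟩ => hst h.symm) (fun ⟨h, _⟩ => hsbt h.symm)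
  have nDC : s(t, tb) ≠ s(t, ta) :=
    sym2_ne_of (fun ⟨_, h⟩ => htab h.symm) (fun ⟨h, _⟩ => htat h.symm)
  have nWA : s(w, vC) ≠ s(s, sa) :=
    sym2_ne_of (fun ⟨h, _⟩ => hws h) (fun ⟨h, _⟩ => hsaw h.symm)
  have nWB : s(w, vC) ≠ s(s, sb) :=
    sym2_ne_of (fun ⟨h, _⟩ => hws h) (fun ⟨h, _⟩ => hsbw h.symm)
  have nWC : s(w, vC) ≠ s(t, ta) :=
    sym2_ne_of (fun ⟨h, _⟩ => hwt2 h) (fun ⟨h, _⟩ => htaw h.symm)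
  have nWD : s(w, vC) ≠ s(t, tb) :=
    sym2_ne_of (fun ⟨h, _⟩ => hwt2 h) (fun ⟨h, _⟩ => htbw h.symm)
  -- the w-cycle constraints
  have hW : ∀ i : ZMod m,
      col s((w, i), (w, i + 1)) ≠ col s((w, i + 1), (w, i + 1 + 1)) ∧
      col s((w, i + 1), (vC, i + 1)) ≠ col s((w, i), (w, i + 1)) ∧
      col s((w, i + 1), (vC, i + 1)) ≠ col s((w, i + 1), (w, i + 1 + 1)) := by
    intro i
    have mE1 : s((w, i), (w, i + 1)) ∈ H.edgeSet := by
      rw [SimpleGraph.mem_edgeSet, hcross i (i + 1) (hne01 i)]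
      exact Or.inr (Or.inr ⟨rfl, rfl, Or.inl rfl⟩)
    have mE2 : s((w, i + 1), (w, i + 1 + 1)) ∈ H.edgeSet := by
      rw [SimpleGraph.mem_edgeSet, hcross (i + 1) (i + 1 + 1) (hne01 (i + 1))]
      exact Or.inr (Or.inr ⟨rfl, rfl, Or.inl rfl⟩)
    have mE3 : s((w, i + 1), (vC, i + 1)) ∈ H.edgeSet := by
      rw [SimpleGraph.mem_edgeSet, hint]
      exact ⟨hvC, hws, hwt2, hvCs, hvCt⟩
    have d12 : s((w, i), (w, i + 1)) ≠ s((w, i + 1), (w, i + 1 + 1)) :=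
      sym2_ne_of (fun ⟨h, _⟩ => hne01 i (congrArg Prod.snd h))
        (fun ⟨h, _⟩ => hne02 i (congrArg Prod.snd h))
    have d31 : s((w, i + 1), (vC, i + 1)) ≠ s((w, i), (w, i + 1)) :=
      sym2_ne_of (fun ⟨h, _⟩ => (hne01 i) (congrArg Prod.snd h).symm)
        (fun ⟨_, h⟩ => hvCw (congrArg Prod.fst h))
    have d32 : s((w, i + 1), (vC, i + 1)) ≠ s((w, i + 1), (w, i + 1 + 1)) :=
      sym2_ne_of (fun ⟨_, h⟩ => hvCw (congrArg Prod.fst h))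
        (fun ⟨h, _⟩ => hne01 (i + 1) (congrArg Prod.snd h))
    refine ⟨?_, ?_, ?_⟩
    · exact hcol _ mE1 _ mE2 d12
        ⟨(w, i + 1), Set.notMem_empty _, Sym2.mem_mk_right _ _, Sym2.mem_mk_left _ _⟩
    · exact hcol _ mE3 _ mE1 d31
        ⟨(w, i + 1), Set.notMem_empty _, Sym2.mem_mk_left _ _, Sym2.mem_mk_right _ _⟩
    · exact hcol _ mE3 _ mE2 d32
        ⟨(w, i + 1), Set.notMem_empty _, Sym2.mem_mk_left _ _, Sym2.mem_mk_left _ _⟩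
  -- the pattern constraints, from `honly` applied to the induced coloring of each layer
  have hpat : ∀ i : ZMod m,
      AdmissiblePattern (col s((w, i + 1), (vC, i + 1)))
        (col s((ta, i), (sa, i + 1)), col s((tb, i), (sb, i + 1)))
        (col s((ta, i + 1), (sa, i + 1 + 1)), col s((tb, i + 1), (sb, i + 1 + 1))) := by
    intro i
    -- distinctness of lifted special edges
    have nBA' : s((tb, i), (sb, i + 1)) ≠ s((ta, i), (sa, i + 1)) :=
      sym2_ne_of (fun ⟨h, _⟩ => htab (congrArg Prod.fst h).symm)
        (fun ⟨h, _⟩ => hne01 i (congrArg Prod.snd h))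
    have nA'A : s((ta, i + 1), (sa, i + 1 + 1)) ≠ s((ta, i), (sa, i + 1)) :=
      sym2_ne_of (fun ⟨h, _⟩ => hne01 i (congrArg Prod.snd h).symm)
        (fun ⟨_, h⟩ => hne02 i (congrArg Prod.snd h).symm)
    have nA'B : s((ta, i + 1), (sa, i + 1 + 1)) ≠ s((tb, i), (sb, i + 1)) :=
      sym2_ne_of (fun ⟨h, _⟩ => hne01 i (congrArg Prod.snd h).symm)
        (fun ⟨_, h⟩ => hne02 i (congrArg Prod.snd h).symm)
    have nB'A : s((tb, i + 1), (sb, i + 1 + 1)) ≠ s((ta, i), (sa, i + 1)) :=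
      sym2_ne_of (fun ⟨h, _⟩ => hne01 i (congrArg Prod.snd h).symm)
        (fun ⟨_, h⟩ => hne02 i (congrArg Prod.snd h).symm)
    have nB'B : s((tb, i + 1), (sb, i + 1 + 1)) ≠ s((tb, i), (sb, i + 1)) :=
      sym2_ne_of (fun ⟨h, _⟩ => hne01 i (congrArg Prod.snd h).symm)
        (fun ⟨_, h⟩ => hne02 i (congrArg Prod.snd h).symm)
    have nB'A' : s((tb, i + 1), (sb, i + 1 + 1)) ≠ s((ta, i + 1), (sa, i + 1 + 1)) :=
      sym2_ne_of (fun ⟨h, _⟩ => htab (congrArg Prod.fst h).symm)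
        (fun ⟨h, _⟩ => hne01 (i + 1) (congrArg Prod.snd h))
    -- the lifted edge is in H
    have hmem : ∀ e ∈ G.edgeSet \ ({s(s, w), s(w, t)} : Set (Sym2 U)),
        phi s t sa sb ta tb i e ∈ H.edgeSet := by
      intro e he
      rcases hclass e he with h | h | h | h | hgen
      · rw [h]; simp only [phi, if_true]
        rw [SimpleGraph.mem_edgeSet, hcross i (i + 1) (hne01 i)]
        exact Or.inl ⟨rfl, Or.inl ⟨rfl, rfl⟩⟩
      · rw [h]; simp only [phi, if_true]; rw [if_neg nBA]
        rw [SimpleGraph.mem_edgeSet, hcross i (i + 1) (hne01 i)]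
        exact Or.inl ⟨rfl, Or.inr ⟨rfl, rfl⟩⟩
      · rw [h]; simp only [phi, if_true]; rw [if_neg nCA, if_neg nCB]
        rw [SimpleGraph.mem_edgeSet, hcross (i + 1) (i + 1 + 1) (hne01 (i + 1))]
        exact Or.inl ⟨rfl, Or.inl ⟨rfl, rfl⟩⟩
      · rw [h]; simp only [phi, if_true]; rw [if_neg nDA, if_neg nDB, if_neg nDC]
        rw [SimpleGraph.mem_edgeSet, hcross (i + 1) (i + 1 + 1) (hne01 (i + 1))]
        exact Or.inl ⟨rfl, Or.inr ⟨rfl, rfl⟩⟩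
      · have n1 : e ≠ s(s, sa) := by rintro rfl; exact hgen.1 (Sym2.mem_mk_left _ _)
        have n2 : e ≠ s(s, sb) := by rintro rfl; exact hgen.1 (Sym2.mem_mk_left _ _)
        have n3 : e ≠ s(t, ta) := by rintro rfl; exact hgen.2 (Sym2.mem_mk_left _ _)
        have n4 : e ≠ s(t, tb) := by rintro rfl; exact hgen.2 (Sym2.mem_mk_left _ _)
        simp only [phi]
        rw [if_neg n1, if_neg n2, if_neg n3, if_neg n4]
        have heE : e ∈ G.edgeSet := he.1
        obtain ⟨hs', ht'⟩ := hgen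
        revert heE hs' ht'
        clear n1 n2 n3 n4 he
        induction e using Sym2.ind with
        | _ u₁ u₂ =>
          intro heE hs' ht'
          rw [Sym2.mem_iff] at hs' ht'
          push_neg at hs' ht'
          rw [SimpleGraph.mem_edgeSet] at heE
          rw [Sym2.map_pair_eq, SimpleGraph.mem_edgeSet, hint]
          exact ⟨heE, fun h => hs'.1 h.symm, fun h => ht'.1 h.symm,
            fun h => hs'.2 h.symm, fun h => ht'.2 h.symm⟩
    -- the shared-vertex property of the lift
    have hver : ∀ e ∈ G.edgeSet \ ({s(s, w), s(w, t)} : Set (Sym2 U)),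
        ∀ v : U, v ≠ s → v ≠ t → v ∈ e → (v, i + 1) ∈ phi s t sa sb ta tb i e := by
      intro e he v hvs hvt hv
      rcases hclass e he with h | h | h | h | hgen
      · rw [h] at hv ⊢
        rw [Sym2.mem_iff] at hv
        rcases hv with rfl | rfl
        · exact absurd rfl hvs
        · simp only [phi, if_true]; exact Sym2.mem_mk_right _ _
      · rw [h] at hv ⊢
        rw [Sym2.mem_iff] at hv
        rcases hv with rfl | rfl
        · exact absurd rfl hvs
        · simp only [phi, if_true]; rw [if_neg nBA]; exact Sym2.mem_mk_right _ _
      · rw [h] at hv ⊢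
        rw [Sym2.mem_iff] at hv
        rcases hv with rfl | rfl
        · exact absurd rfl hvt
        · simp only [phi, if_true]; rw [if_neg nCA, if_neg nCB]
          exact Sym2.mem_mk_left _ _
      · rw [h] at hv ⊢
        rw [Sym2.mem_iff] at hv
        rcases hv with rfl | rfl
        · exact absurd rfl hvt
        · simp only [phi, if_true]
          rw [if_neg nDA, if_neg nDB, if_neg nDC]
          exact Sym2.mem_mk_left _ _
      · have n1 : e ≠ s(s, sa) := by rintro rfl; exact hgen.1 (Sym2.mem_mk_left _ _)
        have n2 : e ≠ s(s, sb) := by rintro rfl; exact hgen.1 (Sym2.mem_mk_left _ _)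
        have n3 : e ≠ s(t, ta) := by rintro rfl; exact hgen.2 (Sym2.mem_mk_left _ _)
        have n4 : e ≠ s(t, tb) := by rintro rfl; exact hgen.2 (Sym2.mem_mk_left _ _)
        simp only [phi]
        rw [if_neg n1, if_neg n2, if_neg n3, if_neg n4]
        exact Sym2.mem_map.mpr ⟨v, hv, rfl⟩
    -- injectivity of the lift (via the left inverse psi)
    have hpsi : ∀ e ∈ G.edgeSet \ ({s(s, w), s(w, t)} : Set (Sym2 U)),
        psi s t sa sb ta tb i (phi s t sa sb ta tb i e) = e := by
      intro e he
      rcases hclass e he with h | h | h | h | hgen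
      · rw [h]; simp only [phi, if_true, psi]
      · rw [h]; simp only [phi, if_true]; rw [if_neg nBA]
        simp only [psi, if_true]; rw [if_neg nBA']
      · rw [h]; simp only [phi, if_true]; rw [if_neg nCA, if_neg nCB]
        simp only [psi, if_true]; rw [if_neg nA'A, if_neg nA'B]
      · rw [h]; simp only [phi, if_true]
        rw [if_neg nDA, if_neg nDB, if_neg nDC]
        simp only [psi, if_true]
        rw [if_neg nB'A, if_neg nB'B, if_neg nB'A']
      · have n1 : e ≠ s(s, sa) := by rintro rfl; exact hgen.1 (Sym2.mem_mk_left _ _)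
        have n2 : e ≠ s(s, sb) := by rintro rfl; exact hgen.1 (Sym2.mem_mk_left _ _)
        have n3 : e ≠ s(t, ta) := by rintro rfl; exact hgen.2 (Sym2.mem_mk_left _ _)
        have n4 : e ≠ s(t, tb) := by rintro rfl; exact hgen.2 (Sym2.mem_mk_left _ _)
        simp only [phi]
        rw [if_neg n1, if_neg n2, if_neg n3, if_neg n4]
        clear n1 n2 n3 n4 hgen he
        induction e using Sym2.ind with
        | _ u₁ u₂ =>
          rw [Sym2.map_pair_eq]
          simp only [psi]
          rw [if_neg (sym2_ne_of (fun ⟨h, _⟩ => hne01 i (congrArg Prod.snd h).symm)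
                (fun ⟨_, h⟩ => hne01 i (congrArg Prod.snd h).symm)),
            if_neg (sym2_ne_of (fun ⟨h, _⟩ => hne01 i (congrArg Prod.snd h).symm)
                (fun ⟨_, h⟩ => hne01 i (congrArg Prod.snd h).symm)),
            if_neg (sym2_ne_of (fun ⟨_, h⟩ => hne01 (i + 1) (congrArg Prod.snd h))
                (fun ⟨h, _⟩ => hne01 (i + 1) (congrArg Prod.snd h))),
            if_neg (sym2_ne_of (fun ⟨_, h⟩ => hne01 (i + 1) (congrArg Prod.snd h))
                (fun ⟨h, _⟩ => hne01 (i + 1) (congrArg Prod.snd h)))]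
          rw [Sym2.map_pair_eq]
    -- properness of the induced layer coloring
    have hproper : ProperOn (G.edgeSet \ {s(s, w), s(w, t)}) ({s, w, t} : Set U)
        (fun e => col (phi s t sa sb ta tb i e)) := by
      intro e₁ he₁ e₂ he₂ hne hv
      obtain ⟨v, hvX, hv1, hv2⟩ := hv
      simp only [Set.mem_insert_iff, Set.mem_singleton_iff, not_or] at hvX
      obtain ⟨hvs, hvw, hvt⟩ := hvX
      exact hcol _ (hmem e₁ he₁) _ (hmem e₂ he₂)
        (fun h => hne (by rw [← hpsi e₁ he₁, ← hpsi e₂ he₂, h]))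
        ⟨(v, i + 1), Set.notMem_empty _, hver e₁ he₁ v hvs hvt hv1,
          hver e₂ he₂ v hvs hvt hv2⟩
    have hadm := honly (fun e => col (phi s t sa sb ta tb i e)) hproper
    -- compute the five relevant values
    have eW : phi s t sa sb ta tb i s(w, vC) = s((w, i + 1), (vC, i + 1)) := by
      simp only [phi]
      rw [if_neg nWA, if_neg nWB, if_neg nWC, if_neg nWD, Sym2.map_pair_eq]
    have eA : phi s t sa sb ta tb i s(s, sa) = s((ta, i), (sa, i + 1)) := by
      simp only [phi, if_true]
    have eB : phi s t sa sb ta tb i s(s, sb) = s((tb, i), (sb, i + 1)) := by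
      simp only [phi, if_true]; rw [if_neg nBA]
    have eC : phi s t sa sb ta tb i s(t, ta) = s((ta, i + 1), (sa, i + 1 + 1)) := by
      simp only [phi, if_true]; rw [if_neg nCA, if_neg nCB]
    have eD : phi s t sa sb ta tb i s(t, tb) = s((tb, i + 1), (sb, i + 1 + 1)) := by
      simp only [phi, if_true]
      rw [if_neg nDA, if_neg nDB, if_neg nDC]
    simp only [eW, eA, eB, eC, eD] at hadm
    exact hadm
  -- assemble the parity contradiction
  apply parity_contra hmodd (fun i : ZMod m =>
    fInv (col s((w, i), (w, i + 1))) (col s((ta, i), (sa, i + 1))) (col s((tb, i), (sb, i + 1))))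
  intro i
  obtain ⟨hee, hx1, hx2⟩ := hW i
  exact step_flip _ _ _ _ _ _ _ hee hx1 hx2 (hpat i)
end
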